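/- arXiv:1810.01464 — 4 statements merged into one kernel-verified Lean document; each statement's English description precedes it below -/
import Mathlib

section
/- For positive semi-definite n×n complex matrices Z and A and any real p ≥ 1, the Frobenius norm satisfies ‖Z^(1/p) − A^(1/p)‖_F ≤ n^((p−1)/2) · ‖Z − A‖_F^(1/p), where X^(1/p) denotes the unique positive semi-definite p-th root of X. -/
open Matrix
open scoped ComplexOrder

attribute [local instance] Matrix.frobeniusNormedAddCommGroup

/-- Functional calculus: apply `f : ℝ → ℝ` to the eigenvalues of a Hermitian matrix
via its spectral decomposition (junk value `0` if the matrix is not Hermitian). -/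
noncomputable def herFun {n : Type*} [Fintype n] [DecidableEq n]
    (f : ℝ → ℝ) (M : Matrix n n ℂ) : Matrix n n ℂ :=
  if h : M.IsHermitian then
    (h.eigenvectorUnitary : Matrix n n ℂ) *
      Matrix.diagonal (fun i => (f (h.eigenvalues i) : ℂ)) *
      star (h.eigenvectorUnitary : Matrix n n ℂ)
  else 0

/-- `M ^ s` for a positive semidefinite matrix `M` (the unique positive semidefinite
`s`-th power); junk value for non-Hermitian `M`. -/
noncomputable def herPow {n : Type*} [Fintype n] [DecidableEq n]
    (M : Matrix n n ℂ) (s : ℝ) : Matrix n n ℂ :=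
  herFun (fun t => (max t 0) ^ s) M

/- ### Auxiliary lemmas -/

/-- Frobenius norm squared is the sum of squared entry norms. -/
lemma wihler_frob_sq {m : Type*} [Fintype m] (M : Matrix m m ℂ) :
    ‖M‖ ^ 2 = ∑ i, ∑ j, ‖M i j‖ ^ 2 := by
  rw [Matrix.frobenius_norm_def, ← Real.rpow_natCast _ 2, ← Real.rpow_mul (by positivity)]
  norm_num

lemma wihler_trace_eq {m : Type*} [Fintype m] (M : Matrix m m ℂ) :
    (Mᴴ * M).trace = ((∑ i, ∑ j, ‖M i j‖ ^ 2 : ℝ) : ℂ) := by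
  simp only [Matrix.trace, Matrix.diag, Matrix.mul_apply, Matrix.conjTranspose_apply]
  push_cast
  rw [Finset.sum_comm]
  congr 1; ext i; congr 1; ext j
  rw [RCLike.star_def, RCLike.conj_mul]
  norm_cast

/-- Frobenius norm is invariant under unitary equivalence. -/
lemma wihler_frob_unitary {m : Type*} [Fintype m] [DecidableEq m]
    (U V : Matrix.unitaryGroup m ℂ) (M : Matrix m m ℂ) :
    ‖(U : Matrix m m ℂ) * M * star (V : Matrix m m ℂ)‖ = ‖M‖ := by
  have hU : star (U : Matrix m m ℂ) * U = 1 := Matrix.UnitaryGroup.star_mul_self U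
  have hV : star (V : Matrix m m ℂ) * V = 1 := Matrix.UnitaryGroup.star_mul_self V
  have h1 : (((U : Matrix m m ℂ) * M * star (V : Matrix m m ℂ))ᴴ *
      ((U : Matrix m m ℂ) * M * star (V : Matrix m m ℂ))).trace = (Mᴴ * M).trace := by
    simp only [Matrix.conjTranspose_mul, Matrix.conjTranspose_conjTranspose]
    rw [show (star (V:Matrix m m ℂ))ᴴ = (V:Matrix m m ℂ) from by
      simp [Matrix.star_eq_conjTranspose]]
    rw [show (U:Matrix m m ℂ)ᴴ = star (U:Matrix m m ℂ) from rfl]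
    simp only [← mul_assoc]
    rw [mul_assoc ((V:Matrix m m ℂ) * Mᴴ) (star (U:Matrix m m ℂ)) (U:Matrix m m ℂ), hU, mul_one,
      Matrix.trace_mul_cycle, ← mul_assoc (star (V:Matrix m m ℂ)) (V:Matrix m m ℂ) Mᴴ, hV,
      one_mul]
  have h2 := congrArg Complex.re ((wihler_trace_eq _).symm.trans (h1.trans (wihler_trace_eq M)))
  simp only [Complex.ofReal_re] at h2
  rw [← wihler_frob_sq, ← wihler_frob_sq] at h2
  exact (pow_left_inj₀ (norm_nonneg _) (norm_nonneg _) two_ne_zero).mp h2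

/-- Scalar Hölder continuity of `t ↦ t ^ q` for `0 < q ≤ 1`. -/
lemma wihler_abs_rpow_sub {q : ℝ} (hq0 : 0 < q) (hq1 : q ≤ 1) {a b : ℝ}
    (ha : 0 ≤ a) (hb : 0 ≤ b) :
    |a ^ q - b ^ q| ≤ |a - b| ^ q := by
  wlog hab : b ≤ a generalizing a b
  · rw [abs_sub_comm, abs_sub_comm a b]; exact this hb ha (le_of_not_ge hab)
  have h1 : a ^ q ≤ (a - b) ^ q + b ^ q := by
    calc a ^ q = ((a - b) + b) ^ q := by ring_nf
    _ ≤ (a - b) ^ q + b ^ q := by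
        have h := NNReal.coe_le_coe.mpr
          (NNReal.rpow_add_le_add_rpow (⟨a - b, by linarith⟩ : NNReal) (⟨b, hb⟩ : NNReal)
            hq0.le hq1)
        push_cast at h
        exact Real.rpow_add_le_add_rpow (by linarith : (0:ℝ) ≤ a - b) hb hq0.le hq1
  have h2 : 0 ≤ a ^ q - b ^ q := by
    have := Real.rpow_le_rpow hb hab hq0.le
    linarith
  rw [abs_of_nonneg h2, abs_of_nonneg (by linarith : (0:ℝ) ≤ a - b)]
  linarith

set_option maxHeartbeats 1000000 in
/-- **Wihler's inequality.** For positive semidefinite `Z, A` and `p ≥ 1`,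
`‖Z^(1/p) − A^(1/p)‖_F ≤ n^((p−1)/2) ‖Z − A‖_F^(1/p)` in the Frobenius norm. -/
theorem wihler_inequality {n : ℕ} (p : ℝ) (hp : 1 ≤ p)
    (Z A : Matrix (Fin n) (Fin n) ℂ) (hZ : Z.PosSemidef) (hA : A.PosSemidef) :
    ‖herPow Z p⁻¹ - herPow A p⁻¹‖ ≤ (n : ℝ) ^ ((p - 1) / 2) * ‖Z - A‖ ^ p⁻¹ := by
  have hp0 : 0 < p := lt_of_lt_of_le one_pos hp
  have hq0 : 0 < p⁻¹ := inv_pos.mpr hp0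
  have hq1 : p⁻¹ ≤ 1 := by
    rw [inv_le_one_iff₀]; right; exact hp
  rcases Nat.eq_zero_or_pos n with hn | hn
  · subst hn
    have h0 : ∀ M : Matrix (Fin 0) (Fin 0) ℂ, M = 0 := fun M => Subsingleton.elim _ _
    rw [h0 (herPow Z p⁻¹ - herPow A p⁻¹), norm_zero]
    positivity
  -- main case
  set U : Matrix.unitaryGroup (Fin n) ℂ := hZ.1.eigenvectorUnitary with hU
  set V : Matrix.unitaryGroup (Fin n) ℂ := hA.1.eigenvectorUnitary with hV
  set α : Fin n → ℝ := hZ.1.eigenvalues with hα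
  set β : Fin n → ℝ := hA.1.eigenvalues with hβ
  set C : Matrix (Fin n) (Fin n) ℂ := star (U : Matrix (Fin n) (Fin n) ℂ) * V with hC
  have hUs : star (U : Matrix (Fin n) (Fin n) ℂ) * U = 1 := Matrix.UnitaryGroup.star_mul_self U
  have hUm : (U : Matrix (Fin n) (Fin n) ℂ) * star (U : Matrix (Fin n) (Fin n) ℂ) = 1 := U.2.2
  have hVs : star (V : Matrix (Fin n) (Fin n) ℂ) * V = 1 := Matrix.UnitaryGroup.star_mul_self V
  have hVm : (V : Matrix (Fin n) (Fin n) ℂ) * star (V : Matrix (Fin n) (Fin n) ℂ) = 1 := V.2.2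
  -- spectral decompositions
  have hZspec : Z = (U : Matrix (Fin n) (Fin n) ℂ) *
      Matrix.diagonal (fun i => ((α i : ℝ) : ℂ)) * star (U : Matrix (Fin n) (Fin n) ℂ) := by
    exact hZ.1.spectral_theorem
  have hAspec : A = (V : Matrix (Fin n) (Fin n) ℂ) *
      Matrix.diagonal (fun i => ((β i : ℝ) : ℂ)) * star (V : Matrix (Fin n) (Fin n) ℂ) := by
    exact hA.1.spectral_theorem
  have hZpow : herPow Z p⁻¹ = (U : Matrix (Fin n) (Fin n) ℂ) *
      Matrix.diagonal (fun i => ((α i ^ p⁻¹ : ℝ) : ℂ)) * star (U : Matrix (Fin n) (Fin n) ℂ) := by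
    have hfun : (fun i => (((max (hZ.1.eigenvalues i) 0) ^ p⁻¹ : ℝ) : ℂ)) =
        fun i => ((hZ.1.eigenvalues i ^ p⁻¹ : ℝ) : ℂ) := by
      funext i
      rw [max_eq_left (hZ.eigenvalues_nonneg i)]
    rw [herPow, herFun, dif_pos hZ.1, hfun]
  have hApow : herPow A p⁻¹ = (V : Matrix (Fin n) (Fin n) ℂ) *
      Matrix.diagonal (fun i => ((β i ^ p⁻¹ : ℝ) : ℂ)) * star (V : Matrix (Fin n) (Fin n) ℂ) := by
    have hfun : (fun i => (((max (hA.1.eigenvalues i) 0) ^ p⁻¹ : ℝ) : ℂ)) =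
        fun i => ((hA.1.eigenvalues i ^ p⁻¹ : ℝ) : ℂ) := by
      funext i
      rw [max_eq_left (hA.eigenvalues_nonneg i)]
    rw [herPow, herFun, dif_pos hA.1, hfun]
  -- difference identity
  have diff_eq : ∀ (a b : Fin n → ℝ),
      (U : Matrix (Fin n) (Fin n) ℂ) * Matrix.diagonal (fun i => ((a i : ℝ) : ℂ)) *
        star (U : Matrix (Fin n) (Fin n) ℂ) -
      (V : Matrix (Fin n) (Fin n) ℂ) * Matrix.diagonal (fun i => ((b i : ℝ) : ℂ)) *
        star (V : Matrix (Fin n) (Fin n) ℂ) =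
      (U : Matrix (Fin n) (Fin n) ℂ) *
        (Matrix.diagonal (fun i => ((a i : ℝ) : ℂ)) * C -
          C * Matrix.diagonal (fun i => ((b i : ℝ) : ℂ))) *
        star (V : Matrix (Fin n) (Fin n) ℂ) := by
    intro a b
    have e1 : (U : Matrix (Fin n) (Fin n) ℂ) * (Matrix.diagonal (fun i => ((a i : ℝ) : ℂ)) *
        (star (U : Matrix (Fin n) (Fin n) ℂ) * V)) * star (V : Matrix (Fin n) (Fin n) ℂ) =
        (U : Matrix (Fin n) (Fin n) ℂ) * Matrix.diagonal (fun i => ((a i : ℝ) : ℂ)) *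
        star (U : Matrix (Fin n) (Fin n) ℂ) := by
      calc (U : Matrix (Fin n) (Fin n) ℂ) * (Matrix.diagonal (fun i => ((a i : ℝ) : ℂ)) *
            (star (U : Matrix (Fin n) (Fin n) ℂ) * V)) * star (V : Matrix (Fin n) (Fin n) ℂ)
          = (U : Matrix (Fin n) (Fin n) ℂ) * (Matrix.diagonal (fun i => ((a i : ℝ) : ℂ)) *
            (star (U : Matrix (Fin n) (Fin n) ℂ) * ((V : Matrix (Fin n) (Fin n) ℂ) *
            star (V : Matrix (Fin n) (Fin n) ℂ)))) := by simp only [mul_assoc]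
        _ = _ := by rw [hVm, mul_one, ← mul_assoc]
    have e2 : (U : Matrix (Fin n) (Fin n) ℂ) * ((star (U : Matrix (Fin n) (Fin n) ℂ) *
        (V : Matrix (Fin n) (Fin n) ℂ)) * Matrix.diagonal (fun i => ((b i : ℝ) : ℂ))) *
        star (V : Matrix (Fin n) (Fin n) ℂ) =
        (V : Matrix (Fin n) (Fin n) ℂ) * Matrix.diagonal (fun i => ((b i : ℝ) : ℂ)) *
        star (V : Matrix (Fin n) (Fin n) ℂ) := by
      calc (U : Matrix (Fin n) (Fin n) ℂ) * ((star (U : Matrix (Fin n) (Fin n) ℂ) *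
            (V : Matrix (Fin n) (Fin n) ℂ)) * Matrix.diagonal (fun i => ((b i : ℝ) : ℂ))) *
            star (V : Matrix (Fin n) (Fin n) ℂ)
          = ((U : Matrix (Fin n) (Fin n) ℂ) * star (U : Matrix (Fin n) (Fin n) ℂ)) *
            ((V : Matrix (Fin n) (Fin n) ℂ) * (Matrix.diagonal (fun i => ((b i : ℝ) : ℂ)) *
            star (V : Matrix (Fin n) (Fin n) ℂ))) := by simp only [mul_assoc]
        _ = _ := by rw [hUm, one_mul, ← mul_assoc]
    rw [Matrix.mul_sub, Matrix.sub_mul, hC, e1, e2]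
  -- norm of such differences as a weighted sum
  have norm_sq_eq : ∀ (a b : Fin n → ℝ),
      ‖(U : Matrix (Fin n) (Fin n) ℂ) * Matrix.diagonal (fun i => ((a i : ℝ) : ℂ)) *
        star (U : Matrix (Fin n) (Fin n) ℂ) -
      (V : Matrix (Fin n) (Fin n) ℂ) * Matrix.diagonal (fun i => ((b i : ℝ) : ℂ)) *
        star (V : Matrix (Fin n) (Fin n) ℂ)‖ ^ 2 =
      ∑ i, ∑ j, ‖C i j‖ ^ 2 * (a i - b j) ^ 2 := by
    intro a b
    rw [diff_eq a b, wihler_frob_unitary U V, wihler_frob_sq]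
    congr 1; ext i; congr 1; ext j
    have hent : (Matrix.diagonal (fun i => ((a i : ℝ) : ℂ)) * C -
        C * Matrix.diagonal (fun i => ((b i : ℝ) : ℂ))) i j =
        (((a i - b j : ℝ)) : ℂ) * C i j := by
      simp only [Matrix.sub_apply, Matrix.diagonal_mul, Matrix.mul_diagonal]
      push_cast
      ring
    rw [hent, norm_mul, mul_pow, Complex.norm_real, Real.norm_eq_abs, sq_abs]
    ring
  -- L and R
  have hL2 : ‖herPow Z p⁻¹ - herPow A p⁻¹‖ ^ 2 =
      ∑ i, ∑ j, ‖C i j‖ ^ 2 * (α i ^ p⁻¹ - β j ^ p⁻¹) ^ 2 := by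
    rw [hZpow, hApow]; exact norm_sq_eq _ _
  have hR2 : ‖Z - A‖ ^ 2 = ∑ i, ∑ j, ‖C i j‖ ^ 2 * (α i - β j) ^ 2 := by
    conv_lhs => rw [hZspec, hAspec]
    exact norm_sq_eq _ _
  have hCsum : ∑ i, ∑ j, ‖C i j‖ ^ 2 = (n : ℝ) := by
    have h1 : Cᴴ * C = 1 := by
      rw [hC]
      rw [show (star (U : Matrix (Fin n) (Fin n) ℂ) * (V : Matrix (Fin n) (Fin n) ℂ))ᴴ =
        star (V : Matrix (Fin n) (Fin n) ℂ) * (U : Matrix (Fin n) (Fin n) ℂ) from by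
          simp [Matrix.star_eq_conjTranspose, Matrix.conjTranspose_mul]]
      calc star (V : Matrix (Fin n) (Fin n) ℂ) * (U : Matrix (Fin n) (Fin n) ℂ) *
            (star (U : Matrix (Fin n) (Fin n) ℂ) * (V : Matrix (Fin n) (Fin n) ℂ))
          = star (V : Matrix (Fin n) (Fin n) ℂ) * ((U : Matrix (Fin n) (Fin n) ℂ) *
            star (U : Matrix (Fin n) (Fin n) ℂ)) * V := by simp only [mul_assoc]
        _ = 1 := by rw [hUm, mul_one, hVs]
    have h2 := wihler_trace_eq C
    rw [h1, Matrix.trace_one] at h2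
    have h3 : ((n : ℝ) : ℂ) = ((∑ i, ∑ j, ‖C i j‖ ^ 2 : ℝ) : ℂ) := by
      rw [← h2]; norm_num
    exact_mod_cast h3.symm
  -- weighted Hölder
  have key : ‖herPow Z p⁻¹ - herPow A p⁻¹‖ ^ 2 ≤
      (n : ℝ) ^ (1 - p⁻¹) * (‖Z - A‖ ^ 2) ^ p⁻¹ := by
    set w : Fin n × Fin n → ℝ := fun ij => ‖C ij.1 ij.2‖ ^ 2 with hw
    set f : Fin n × Fin n → ℝ := fun ij => ((α ij.1 - β ij.2) ^ 2) ^ p⁻¹ with hf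
    calc ‖herPow Z p⁻¹ - herPow A p⁻¹‖ ^ 2
        = ∑ ij : Fin n × Fin n, w ij * (α ij.1 ^ p⁻¹ - β ij.2 ^ p⁻¹) ^ 2 := by
          rw [hL2]
          exact (Fintype.sum_prod_type (fun ij : Fin n × Fin n => w ij * (α ij.1 ^ p⁻¹ - β ij.2 ^ p⁻¹) ^ 2)).symm
      _ ≤ ∑ ij : Fin n × Fin n, w ij * f ij := by
          apply Finset.sum_le_sum
          intro ij _
          apply mul_le_mul_of_nonneg_left _ (by positivity)
          have h := wihler_abs_rpow_sub hq0 hq1 (hZ.eigenvalues_nonneg ij.1)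
            (hA.eigenvalues_nonneg ij.2)
          calc (α ij.1 ^ p⁻¹ - β ij.2 ^ p⁻¹) ^ 2
              = |α ij.1 ^ p⁻¹ - β ij.2 ^ p⁻¹| ^ 2 := (sq_abs _).symm
            _ ≤ (|α ij.1 - β ij.2| ^ p⁻¹) ^ 2 := by
                apply pow_le_pow_left₀ (abs_nonneg _) h
            _ = f ij := by
                rw [hf, ← Real.rpow_natCast (|α ij.1 - β ij.2| ^ p⁻¹) 2,
                  ← Real.rpow_mul (abs_nonneg _), mul_comm,
                  Real.rpow_mul (abs_nonneg _), Real.rpow_natCast, sq_abs]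
      _ ≤ (∑ ij : Fin n × Fin n, w ij) ^ (1 - p⁻¹) *
            (∑ ij : Fin n × Fin n, w ij * f ij ^ p) ^ p⁻¹ :=
          Real.inner_le_weight_mul_Lp_of_nonneg Finset.univ hp w f
            (fun _ => by positivity) (fun _ => by positivity)
      _ = (n : ℝ) ^ (1 - p⁻¹) * (‖Z - A‖ ^ 2) ^ p⁻¹ := by
          congr 1
          · congr 1
            rw [Fintype.sum_prod_type]
            exact hCsum
          · congr 1
            rw [hR2]
            rw [show (∑ i, ∑ j, ‖C i j‖ ^ 2 * (α i - β j) ^ 2) =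
              ∑ ij : Fin n × Fin n, w ij * (α ij.1 - β ij.2) ^ 2 from (Fintype.sum_prod_type (fun ij : Fin n × Fin n => w ij * (α ij.1 - β ij.2) ^ 2)).symm]
            apply Finset.sum_congr rfl
            intro ij _
            rw [hf, hw]
            rw [Real.rpow_inv_rpow (sq_nonneg _) hp0.ne']
  -- take square roots
  have hfinal : ‖herPow Z p⁻¹ - herPow A p⁻¹‖ ≤
      (n : ℝ) ^ ((1 - p⁻¹) / 2) * ‖Z - A‖ ^ p⁻¹ := by
    have hL0 : (0:ℝ) ≤ ‖herPow Z p⁻¹ - herPow A p⁻¹‖ := norm_nonneg _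
    have hR0 : (0:ℝ) ≤ ‖Z - A‖ := norm_nonneg _
    have hX : (0:ℝ) ≤ (n : ℝ) ^ ((1 - p⁻¹) / 2) * ‖Z - A‖ ^ p⁻¹ := by positivity
    have hsq : ((n : ℝ) ^ ((1 - p⁻¹) / 2) * ‖Z - A‖ ^ p⁻¹) ^ 2 =
        (n : ℝ) ^ (1 - p⁻¹) * (‖Z - A‖ ^ 2) ^ p⁻¹ := by
      rw [mul_pow]
      congr 1
      · rw [← Real.rpow_natCast ((n:ℝ) ^ ((1 - p⁻¹) / 2)) 2,
          ← Real.rpow_mul (Nat.cast_nonneg n)]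
        norm_num
      · rw [← Real.rpow_natCast (‖Z - A‖ ^ p⁻¹) 2, ← Real.rpow_mul hR0, mul_comm,
          Real.rpow_mul hR0, Real.rpow_natCast]
    nlinarith [key, hsq, hL0, hX]
  apply hfinal.trans
  apply mul_le_mul_of_nonneg_right _ (by positivity)
  apply Real.rpow_le_rpow_of_exponent_le (by exact_mod_cast hn)
  have h1 : p * p⁻¹ = 1 := mul_inv_cancel₀ hp0.ne'
  nlinarith [sq_nonneg (p - 1), hp0, h1]
end

section
/- In the setting of the previous statement (Z positive semi-definite supported on ker A, b bounding ‖Ẽ‖ and ‖Z‖), one has P₁(Ẽ) Z P₀(Ẽ) = O(b²) and P₁(Ẽ) Z P₁(Ẽ) = O(b³), where P₁(Ẽ) and P₀(Ẽ) are the spectral projections of A + Ẽ onto eigenvalues near the positive part and near 0, respectively. -/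
open Matrix
open scoped Matrix.Norms.L2Operator Matrix ComplexOrder

/-- The Riesz spectral projection of `Λ_α + Ẽ` associated with the circle `C(c, R)`,
where `Λ_α = diag(Λ⁺, 0)` with `Λ⁺ = diag d`. -/
noncomputable def rieszProj {l m : ℕ} (d : Fin l → ℝ) (c : ℂ) (R : ℝ)
    (E : Matrix (Fin l ⊕ Fin m) (Fin l ⊕ Fin m) ℂ) :
    Matrix (Fin l ⊕ Fin m) (Fin l ⊕ Fin m) ℂ :=
  (2 * Real.pi * Complex.I)⁻¹ •
    (∮ z in C(c, R),
      (z • (1 : Matrix (Fin l ⊕ Fin m) (Fin l ⊕ Fin m) ℂ) -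
        (Matrix.fromBlocks (Matrix.diagonal fun i => (d i : ℂ)) 0 0 0 + E))⁻¹)


open Metric

section Helpers

variable {n : Type*} [Fintype n] [DecidableEq n]

lemma norm_diagonal_le (w : n → ℂ) (C : ℝ) (hC : 0 ≤ C) (h : ∀ i, ‖w i‖ ≤ C) :
    ‖(diagonal w : Matrix n n ℂ)‖ ≤ C := by
  rw [Matrix.cstar_norm_def]
  refine ContinuousLinearMap.opNorm_le_bound _ hC fun x => ?_
  have hx : toEuclideanCLM (𝕜 := ℂ) (diagonal w) x =
      (WithLp.equiv 2 _).symm ((diagonal w) *ᵥ (WithLp.equiv 2 _ x)) := by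
    rfl
  rw [hx]
  rw [EuclideanSpace.norm_eq, EuclideanSpace.norm_eq]
  rw [← Real.sqrt_sq hC, ← Real.sqrt_mul (by positivity)]
  apply Real.sqrt_le_sqrt
  rw [Finset.mul_sum]
  apply Finset.sum_le_sum
  intro i _
  have h1 : ‖((WithLp.equiv 2 _).symm ((diagonal w) *ᵥ (WithLp.equiv 2 _ x)) : EuclideanSpace ℂ n) i‖
      = ‖w i * (WithLp.equiv 2 _ x) i‖ := by
    simp [Matrix.mulVec_diagonal]
  have h2 : ‖(x : EuclideanSpace ℂ n) i‖ = ‖(WithLp.equiv 2 _ x) i‖ := rfl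
  rw [h1, norm_mul, mul_pow, h2]
  have := pow_le_pow_left₀ (norm_nonneg (w i)) (h i) 2
  exact mul_le_mul_of_nonneg_right this (by positivity)
lemma diag_isUnit {w : n → ℂ} (hw : ∀ i, w i ≠ 0) : IsUnit (diagonal w) := by
  rw [Matrix.isUnit_iff_isUnit_det, Matrix.det_diagonal]
  exact isUnit_iff_ne_zero.mpr (Finset.prod_ne_zero_iff.mpr fun i _ => hw i)

lemma diag_inv {w : n → ℂ} (hw : ∀ i, w i ≠ 0) :
    (diagonal w)⁻¹ = diagonal (fun i => (w i)⁻¹) := by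
  apply Matrix.inv_eq_right_inv
  rw [Matrix.diagonal_mul_diagonal]
  rw [show (fun i => w i * (w i)⁻¹) = fun _ => (1:ℂ) from funext fun i => mul_inv_cancel₀ (hw i)]
  exact Matrix.diagonal_one

lemma pert (A₀ E : Matrix n n ℂ) (hA : IsUnit A₀) (M : ℝ) (hM : ‖A₀⁻¹‖ ≤ M)
    (hME : M * ‖E‖ ≤ 1/2) :
    IsUnit (A₀ - E) ∧ ‖(A₀ - E)⁻¹‖ ≤ 2 * M ∧ ‖(A₀ - E)⁻¹ - A₀⁻¹‖ ≤ 2 * M * ‖E‖ * M := by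
  obtain ⟨u, hu⟩ := hA
  have hM0 : 0 ≤ M := le_trans (norm_nonneg _) hM
  have hAinv : A₀⁻¹ = (↑u⁻¹ : Matrix n n ℂ) := by
    rw [Matrix.nonsing_inv_eq_ringInverse, ← hu, Ring.inverse_unit]
  have hT : ‖(↑u⁻¹ : Matrix n n ℂ) * E‖ < 1 := by
    calc ‖(↑u⁻¹ : Matrix n n ℂ) * E‖ ≤ ‖(↑u⁻¹ : Matrix n n ℂ)‖ * ‖E‖ := norm_mul_le _ _
    _ ≤ M * ‖E‖ := by rw [← hAinv]; exact mul_le_mul_of_nonneg_right hM (norm_nonneg _)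
    _ < 1 := lt_of_le_of_lt hME (by norm_num)
  set w := Units.oneSub ((↑u⁻¹ : Matrix n n ℂ) * E) hT with hwdef
  have huE : (↑u : Matrix n n ℂ) * ((↑u⁻¹ : Matrix n n ℂ) * E) = E := by
    rw [← mul_assoc, u.mul_inv, one_mul]
  have hval : ((u * w : (Matrix n n ℂ)ˣ) : Matrix n n ℂ) = A₀ - E := by
    rw [Units.val_mul, hwdef, Units.val_oneSub, mul_sub, mul_one, huE, hu]
  have hUnit : IsUnit (A₀ - E) := ⟨u * w, hval⟩
  have hdet : IsUnit A₀.det := (Matrix.isUnit_iff_isUnit_det _).mp ⟨u, hu⟩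
  have hdet' : IsUnit (A₀ - E).det := (Matrix.isUnit_iff_isUnit_det _).mp hUnit
  set B := (A₀ - E)⁻¹ with hB
  have hB1 : B * (A₀ - E) = 1 := Matrix.nonsing_inv_mul _ hdet'
  have hA1 : A₀ * A₀⁻¹ = 1 := Matrix.mul_nonsing_inv _ hdet
  have key : B - A₀⁻¹ = B * E * A₀⁻¹ := by
    have h3 : B * E = B * A₀ - 1 := by
      rw [← hB1, ← mul_sub, sub_sub_cancel]
    rw [h3, sub_mul, mul_assoc, hA1, mul_one, one_mul]
  have hkeynorm : ‖B - A₀⁻¹‖ ≤ ‖B‖ * ‖E‖ * M := by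
    rw [key]
    calc ‖B * E * A₀⁻¹‖ ≤ ‖B * E‖ * ‖A₀⁻¹‖ := norm_mul_le _ _
    _ ≤ ‖B‖ * ‖E‖ * M := by
        apply mul_le_mul (norm_mul_le _ _) hM (norm_nonneg _)
        positivity
  have hBnorm : ‖B‖ ≤ 2 * M := by
    have h1 : ‖B‖ ≤ ‖B - A₀⁻¹‖ + ‖A₀⁻¹‖ := by
      calc ‖B‖ = ‖(B - A₀⁻¹) + A₀⁻¹‖ := by rw [sub_add_cancel]
      _ ≤ _ := norm_add_le _ _
    have h2 : ‖B‖ * ‖E‖ * M ≤ ‖B‖ * (1/2) := by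
      rw [mul_assoc]
      apply mul_le_mul_of_nonneg_left _ (norm_nonneg B)
      calc ‖E‖ * M = M * ‖E‖ := by ring
      _ ≤ 1/2 := hME
    nlinarith [norm_nonneg B, hkeynorm, hM]
  refine ⟨hUnit, hBnorm, ?_⟩
  calc ‖B - A₀⁻¹‖ ≤ ‖B‖ * ‖E‖ * M := hkeynorm
  _ ≤ (2*M) * ‖E‖ * M := by
      apply mul_le_mul_of_nonneg_right _ hM0
      exact mul_le_mul_of_nonneg_right hBnorm (norm_nonneg _)
-- resolvent identity helpers
lemma res_diag (v : n → ℂ) (z : ℂ) :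
    z • (1 : Matrix n n ℂ) - diagonal v = diagonal (fun i => z - v i) := by
  rw [Matrix.smul_one_eq_diagonal, Matrix.diagonal_sub]

lemma res_facts (v : n → ℂ) (z : ℂ) (ρ : ℝ) (hρ : 0 < ρ) (h : ∀ i, ρ ≤ ‖z - v i‖)
    (E : Matrix n n ℂ) (hE : ‖E‖ ≤ ρ/2) :
    IsUnit (z • (1 : Matrix n n ℂ) - (diagonal v + E)) ∧
    ‖(z • (1 : Matrix n n ℂ) - (diagonal v + E))⁻¹‖ ≤ 2*ρ⁻¹ ∧
    ‖(z • (1 : Matrix n n ℂ) - (diagonal v + E))⁻¹ -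
      (z • (1 : Matrix n n ℂ) - diagonal v)⁻¹‖ ≤ 2*ρ⁻¹*‖E‖*ρ⁻¹ ∧
    (z • (1 : Matrix n n ℂ) - diagonal v)⁻¹ = diagonal (fun i => (z - v i)⁻¹) := by
  have hzv : ∀ i, z - v i ≠ 0 := fun i => by
    intro h0
    have := h i; rw [h0, norm_zero] at this; linarith
  have hA0 : z • (1 : Matrix n n ℂ) - diagonal v = diagonal (fun i => z - v i) := res_diag v z
  have hsub : z • (1 : Matrix n n ℂ) - (diagonal v + E) =
      (z • (1 : Matrix n n ℂ) - diagonal v) - E := by abel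
  have hinv : (z • (1 : Matrix n n ℂ) - diagonal v)⁻¹ = diagonal (fun i => (z - v i)⁻¹) := by
    rw [hA0]; exact diag_inv hzv
  have hUnit0 : IsUnit (z • (1 : Matrix n n ℂ) - diagonal v) := by
    rw [hA0]; exact diag_isUnit hzv
  have hMbound : ‖(z • (1 : Matrix n n ℂ) - diagonal v)⁻¹‖ ≤ ρ⁻¹ := by
    rw [hinv]
    apply norm_diagonal_le _ _ (by positivity)
    intro i
    rw [norm_inv]
    exact inv_anti₀ hρ (h i)
  have hME : ρ⁻¹ * ‖E‖ ≤ 1/2 := by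
    have h4 : ρ⁻¹ * ‖E‖ ≤ ρ⁻¹ * (ρ/2) := mul_le_mul_of_nonneg_left hE (by positivity)
    have h5 : ρ⁻¹ * (ρ/2) = 1/2 := by field_simp
    linarith
  obtain ⟨h1, h2, h3⟩ := pert _ E hUnit0 ρ⁻¹ hMbound hME
  rw [← hsub] at h1 h2 h3
  exact ⟨h1, h2, h3, hinv⟩

lemma res_continuousOn (v : n → ℂ) (c : ℂ) (R ρ : ℝ) (hρ : 0 < ρ)
    (hsep : ∀ z ∈ sphere c R, ∀ i, ρ ≤ ‖z - v i‖) (E : Matrix n n ℂ) (hE : ‖E‖ ≤ ρ/2) :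
    ContinuousOn (fun z : ℂ => (z • (1 : Matrix n n ℂ) - (diagonal v + E))⁻¹) (sphere c R) := by
  have hfun : (fun z : ℂ => (z • (1 : Matrix n n ℂ) - (diagonal v + E))⁻¹) =
      fun z => Ring.inverse (z • (1 : Matrix n n ℂ) - (diagonal v + E)) := by
    funext z; exact Matrix.nonsing_inv_eq_ringInverse _
  rw [hfun]
  intro z hz
  apply ContinuousAt.continuousWithinAt
  obtain ⟨u, hu⟩ := (res_facts v z ρ hρ (hsep z hz) E hE).1
  have hcont : Continuous (fun z : ℂ => z • (1 : Matrix n n ℂ) - (diagonal v + E)) :=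
    (continuous_id.smul continuous_const).sub continuous_const
  show ContinuousAt (Ring.inverse ∘ fun z : ℂ => z • (1 : Matrix n n ℂ) - (diagonal v + E)) z
  exact ContinuousAt.comp (hu ▸ NormedRing.inverse_continuousAt u) hcont.continuousAt

lemma circleIntegral_diag (v : n → ℂ) (c : ℂ) (R : ℝ)
    (hNS : ∀ (θ : ℝ) (i : n), circleMap c R θ ≠ v i) :
    (∮ z in C(c, R), (diagonal (fun i => (z - v i)⁻¹) : Matrix n n ℂ)) =
      ∑ i, (∮ z in C(c, R), (z - v i)⁻¹) • (diagonal (Pi.single i 1) : Matrix n n ℂ) := by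
  have hdecomp : ∀ z : ℂ, (diagonal (fun i => (z - v i)⁻¹) : Matrix n n ℂ) =
      ∑ i, ((z - v i)⁻¹) • (diagonal (Pi.single i 1) : Matrix n n ℂ) := by
    intro z
    ext a b
    simp only [Matrix.sum_apply, Matrix.smul_apply, Matrix.diagonal_apply, Pi.single_apply,
      smul_eq_mul]
    by_cases hab : a = b
    · subst hab
      simp [Finset.sum_ite_eq]
    · simp [hab]
  have hcontI : ∀ i : n, Continuous fun θ : ℝ =>
      deriv (circleMap c R) θ •
        (((circleMap c R θ - v i)⁻¹) • (diagonal (Pi.single i 1) : Matrix n n ℂ)) := by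
    intro i
    apply Continuous.fun_smul
    · rw [show deriv (circleMap c R) = fun θ => circleMap 0 R θ * Complex.I from
        funext fun θ => deriv_circleMap c R θ]
      exact (continuous_circleMap 0 R).mul continuous_const
    · apply Continuous.fun_smul _ continuous_const
      exact (((continuous_circleMap c R).sub continuous_const).inv₀
        fun θ => sub_ne_zero.mpr (hNS θ i))
  have step : (∮ z in C(c, R), (diagonal (fun i => (z - v i)⁻¹) : Matrix n n ℂ)) =
      ∑ i, ∮ z in C(c, R), ((z - v i)⁻¹) • (diagonal (Pi.single i 1) : Matrix n n ℂ) := by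
    simp only [circleIntegral, hdecomp, Finset.smul_sum]
    rw [intervalIntegral.integral_finset_sum]
    intro i _
    exact (hcontI i).intervalIntegrable _ _
  rw [step]
  refine Finset.sum_congr rfl fun i _ => ?_
  exact circleIntegral.integral_smul_const _ _ c R

lemma integral_sub_inv_outside {c w : ℂ} {R : ℝ} (hR : 0 ≤ R) (hw : R < ‖w - c‖) :
    (∮ z in C(c, R), (z - w)⁻¹) = 0 := by
  apply Complex.circleIntegral_eq_zero_of_differentiable_on_off_countable hR Set.countable_empty
  · intro z hz
    apply ContinuousAt.continuousWithinAt
    have hzw : z - w ≠ 0 := by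
      rw [sub_ne_zero]
      intro h0; subst h0
      have h1 : dist z c ≤ R := mem_closedBall.mp hz
      rw [dist_eq_norm] at h1
      linarith
    exact ((continuous_id.sub continuous_const).continuousAt).inv₀ hzw
  · intro z hz
    have hzw : z ≠ w := by
      intro h0; subst h0
      have h1 : dist z c < R := mem_ball.mp hz.1
      rw [dist_eq_norm] at h1
      linarith
    exact (differentiableAt_id.sub_const w).inv (sub_ne_zero.mpr hzw)

lemma norm_two_pi_I_inv : ‖((2 * Real.pi * Complex.I)⁻¹ : ℂ)‖ = (2 * Real.pi)⁻¹ := by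
  rw [norm_inv]
  congr 1
  simp [abs_of_pos Real.pi_pos]

lemma two_pi_I_ne : ((2 : ℂ) * Real.pi * Complex.I) ≠ 0 := by
  apply mul_ne_zero (mul_ne_zero two_ne_zero _) Complex.I_ne_zero
  exact_mod_cast Complex.ofReal_ne_zero.mpr Real.pi_pos.ne'

lemma hblock {l m : ℕ} (d : Fin l → ℝ) :
    (fromBlocks (diagonal fun i => (d i : ℂ)) 0 0 0 :
        Matrix (Fin l ⊕ Fin m) (Fin l ⊕ Fin m) ℂ) =
      diagonal (Sum.elim (fun i => (d i : ℂ)) 0) := by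
  rw [← Matrix.diagonal_zero, Matrix.fromBlocks_diagonal]; rfl

lemma riesz_norm_bound {l m : ℕ} (d : Fin l → ℝ) (c : ℂ) (R ρ : ℝ) (hR : 0 < R) (hρ : 0 < ρ)
    (hsep : ∀ z ∈ sphere c R, ∀ i,
      ρ ≤ ‖z - (Sum.elim (fun i => (d i : ℂ)) 0 : (Fin l ⊕ Fin m) → ℂ) i‖)
    (Et : Matrix (Fin l ⊕ Fin m) (Fin l ⊕ Fin m) ℂ) (hE : ‖Et‖ ≤ ρ/2) :
    ‖rieszProj d c R Et‖ ≤ 2 * R * ρ⁻¹ := by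
  set v := (Sum.elim (fun i => (d i : ℂ)) 0 : (Fin l ⊕ Fin m) → ℂ) with hv
  rw [rieszProj, hblock d, norm_smul, norm_two_pi_I_inv]
  have hbound : ‖∮ z in C(c, R),
      (z • (1 : Matrix (Fin l ⊕ Fin m) (Fin l ⊕ Fin m) ℂ) - (diagonal v + Et))⁻¹‖ ≤
      2 * Real.pi * R * (2 * ρ⁻¹) := by
    apply circleIntegral.norm_integral_le_of_norm_le_const hR.le
    intro z hz
    exact (res_facts v z ρ hρ (hsep z hz) Et hE).2.1
  calc (2 * Real.pi)⁻¹ * ‖_‖ ≤ (2 * Real.pi)⁻¹ * (2 * Real.pi * R * (2 * ρ⁻¹)) := by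
        apply mul_le_mul_of_nonneg_left hbound
        positivity
  _ = 2 * R * ρ⁻¹ := by
        field_simp

lemma sum_single_inl {l m : ℕ} :
    (∑ j : Fin l, (diagonal (Pi.single (Sum.inl j) 1) :
        Matrix (Fin l ⊕ Fin m) (Fin l ⊕ Fin m) ℂ)) =
      fromBlocks 1 0 0 0 := by
  ext a b
  simp only [Matrix.sum_apply, Matrix.diagonal_apply]
  by_cases hab : a = b
  · subst hab
    cases a with
    | inl a =>
        simp [Pi.single_apply, Matrix.fromBlocks]
    | inr a =>
        simp [Pi.single_apply, Matrix.fromBlocks]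
  · cases a with
    | inl a =>
        cases b with
        | inl b =>
            have : a ≠ b := fun h => hab (by rw [h])
            simp [hab, Matrix.fromBlocks, Matrix.one_apply, this]
        | inr b => simp [hab, Matrix.fromBlocks]
    | inr a =>
        cases b with
        | inl b => simp [hab, Matrix.fromBlocks]
        | inr b => simp [hab, Matrix.fromBlocks]

lemma riesz_diff_bound {l m : ℕ} (d : Fin l → ℝ) (c : ℂ) (R ρ : ℝ) (hR : 0 < R) (hρ : 0 < ρ)
    (hsep : ∀ z ∈ sphere c R, ∀ i,
      ρ ≤ ‖z - (Sum.elim (fun i => (d i : ℂ)) 0 : (Fin l ⊕ Fin m) → ℂ) i‖)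
    (hin : ∀ i, dist ((d i : ℂ)) c < R) (hout : R < ‖c‖)
    (Et : Matrix (Fin l ⊕ Fin m) (Fin l ⊕ Fin m) ℂ) (hE : ‖Et‖ ≤ ρ/2) :
    ‖rieszProj d c R Et - fromBlocks 1 0 0 0‖ ≤ (2 * R * (ρ⁻¹ * ρ⁻¹)) * ‖Et‖ := by
  set v := (Sum.elim (fun i => (d i : ℂ)) 0 : (Fin l ⊕ Fin m) → ℂ) with hv
  set f := fun z : ℂ => (z • (1 : Matrix (Fin l ⊕ Fin m) (Fin l ⊕ Fin m) ℂ) - (diagonal v + Et))⁻¹ with hf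
  set g := fun z : ℂ => (z • (1 : Matrix (Fin l ⊕ Fin m) (Fin l ⊕ Fin m) ℂ) - diagonal v)⁻¹ with hg
  have hz2 : (0 : ℝ) ≤ ρ/2 := by positivity
  have hgE : g = fun z : ℂ => (z • (1 : Matrix (Fin l ⊕ Fin m) (Fin l ⊕ Fin m) ℂ) - (diagonal v + 0))⁻¹ := by
    funext z; rw [add_zero]
  have hintf : CircleIntegrable f c R :=
    (res_continuousOn v c R ρ hρ hsep Et hE).circleIntegrable hR.le
  have hintg : CircleIntegrable g c R := by
    rw [hgE]
    exact (res_continuousOn v c R ρ hρ hsep 0 (by simpa using hz2)).circleIntegrable hR.le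
  -- value of ∮ g
  have hNS : ∀ (θ : ℝ) (i : Fin l ⊕ Fin m), circleMap c R θ ≠ v i := by
    intro θ i h0
    have h1 := hsep _ (circleMap_mem_sphere c hR.le θ) i
    rw [h0, sub_self, norm_zero] at h1
    linarith
  have hgval : (∮ z in C(c, R), g z) = (2 * Real.pi * Complex.I) •
      (fromBlocks 1 0 0 0 : Matrix (Fin l ⊕ Fin m) (Fin l ⊕ Fin m) ℂ) := by
    have h1 : (∮ z in C(c, R), g z) =
        ∮ z in C(c, R), (diagonal (fun i => (z - v i)⁻¹) : Matrix (Fin l ⊕ Fin m) (Fin l ⊕ Fin m) ℂ) := by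
      apply circleIntegral.integral_congr hR.le
      intro z hz
      have h2 := (res_facts v z ρ hρ (hsep z hz) 0 (by simpa using hz2)).2.2.2
      exact h2
    rw [h1, circleIntegral_diag v c R hNS]
    rw [Fintype.sum_sum_type]
    have hinl : ∀ j : Fin l, (∮ z in C(c, R), (z - v (Sum.inl j))⁻¹) =
        2 * Real.pi * Complex.I := by
      intro j
      apply circleIntegral.integral_sub_inv_of_mem_ball
      simp only [hv, Sum.elim_inl, mem_ball]
      exact hin j
    have hinr : ∀ j : Fin m, (∮ z in C(c, R), (z - v (Sum.inr j))⁻¹) = 0 := by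
      intro j
      have : v (Sum.inr j) = 0 := rfl
      rw [this]
      apply integral_sub_inv_outside hR.le
      rwa [zero_sub, norm_neg]
    simp only [hinl, hinr, zero_smul, Finset.sum_const_zero, add_zero, ← Finset.smul_sum]
    rw [sum_single_inl]
  -- difference
  have hdiff : rieszProj d c R Et - fromBlocks 1 0 0 0 =
      (2 * Real.pi * Complex.I)⁻¹ • ((∮ z in C(c, R), f z) - ∮ z in C(c, R), g z) := by
    rw [smul_sub, rieszProj, hblock d]
    congr 1
    rw [hgval, smul_smul, inv_mul_cancel₀ two_pi_I_ne, one_smul]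
  rw [hdiff, ← circleIntegral.integral_sub hintf hintg, norm_smul, norm_two_pi_I_inv]
  have hbound : ‖∮ z in C(c, R), (f z - g z)‖ ≤
      2 * Real.pi * R * (2 * ρ⁻¹ * ‖Et‖ * ρ⁻¹) := by
    apply circleIntegral.norm_integral_le_of_norm_le_const hR.le
    intro z hz
    exact (res_facts v z ρ hρ (hsep z hz) Et hE).2.2.1
  calc (2 * Real.pi)⁻¹ * ‖∮ z in C(c, R), (f z - g z)‖
      ≤ (2 * Real.pi)⁻¹ * (2 * Real.pi * R * (2 * ρ⁻¹ * ‖Et‖ * ρ⁻¹)) := by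
        apply mul_le_mul_of_nonneg_left hbound
        positivity
  _ = (2 * R * (ρ⁻¹ * ρ⁻¹)) * ‖Et‖ := by
        have hπ : Real.pi ≠ 0 := Real.pi_pos.ne'
        field_simp


end Helpers

set_option maxHeartbeats 1000000 in
/-- If `Z ≥ 0` is supported on `ker A` (`A = diag(Λ⁺,0)`) and `b` bounds `‖Ẽ‖`, `‖Z‖`,
then `P₁(Ẽ) Z P₀(Ẽ) = O(b²)` and `P₁(Ẽ) Z P₁(Ẽ) = O(b³)`. -/
theorem proj_cross_terms {l m : ℕ} (d : Fin l → ℝ) (hd : ∀ i, 0 < d i)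
    (R₀ : ℝ) (hR₀ : 0 < R₀) (hsep : ∀ i, R₀ < d i)
    (c : ℂ) (R : ℝ) (hR : 0 < R)
    (henc : ∀ i, ‖(d i : ℂ) - c‖ < R) (hout : R < ‖c‖) :
    ∃ K > (0 : ℝ), ∃ δ > (0 : ℝ),
      ∀ (b : ℝ) (Et Z : Matrix (Fin l ⊕ Fin m) (Fin l ⊕ Fin m) ℂ),
        Et.IsHermitian → Z.PosSemidef →
        Z * Matrix.fromBlocks 1 0 0 0 = 0 →
        ‖Et‖ ≤ b → ‖Z‖ ≤ b → b ≤ δ →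
        ‖rieszProj d c R Et * Z * rieszProj d 0 R₀ Et‖ ≤ K * b ^ 2 ∧
        ‖rieszProj d c R Et * Z * rieszProj d c R Et‖ ≤ K * b ^ 3 := by
  classical
  set v := (Sum.elim (fun i => (d i : ℂ)) 0 : (Fin l ⊕ Fin m) → ℂ) with hv
  -- the separation constants
  set F : Finset ℝ :=
    insert (‖c‖ - R) (Finset.univ.image fun i : Fin l => R - ‖(d i : ℂ) - c‖) with hF
  have hFne : F.Nonempty := Finset.insert_nonempty _ _
  set ρ : ℝ := F.min' hFne with hρdef
  have hρpos : 0 < ρ := by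
    rw [hρdef, Finset.lt_min'_iff]
    intro x hx
    rcases Finset.mem_insert.mp hx with rfl | hx
    · linarith
    · obtain ⟨i, -, rfl⟩ := Finset.mem_image.mp hx
      linarith [henc i]
  set F₀ : Finset ℝ :=
    insert R₀ (Finset.univ.image fun i : Fin l => d i - R₀) with hF₀
  have hF₀ne : F₀.Nonempty := Finset.insert_nonempty _ _
  set ρ₀ : ℝ := F₀.min' hF₀ne with hρ₀def
  have hρ₀pos : 0 < ρ₀ := by
    rw [hρ₀def, Finset.lt_min'_iff]
    intro x hx
    rcases Finset.mem_insert.mp hx with rfl | hx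
    · exact hR₀
    · obtain ⟨i, -, rfl⟩ := Finset.mem_image.mp hx
      linarith [hsep i]
  -- separation on the two circles
  have hsep1 : ∀ z ∈ Metric.sphere c R, ∀ i, ρ ≤ ‖z - v i‖ := by
    intro z hz i
    have hzc : ‖z - c‖ = R := mem_sphere_iff_norm.mp hz
    cases i with
    | inl j =>
        have h1 : ρ ≤ R - ‖(d j : ℂ) - c‖ :=
          Finset.min'_le F _ (Finset.mem_insert_of_mem
            (Finset.mem_image_of_mem _ (Finset.mem_univ j)))
        have h2 := norm_add_le (z - (d j : ℂ)) ((d j : ℂ) - c)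
        rw [sub_add_sub_cancel] at h2
        simp only [hv, Sum.elim_inl]
        linarith
    | inr j =>
        have h1 : ρ ≤ ‖c‖ - R := Finset.min'_le F _ (Finset.mem_insert_self _ _)
        have h2 := norm_add_le (c - z) z
        rw [sub_add_cancel] at h2
        have h3 : ‖c - z‖ = R := by rw [norm_sub_rev]; exact hzc
        simp only [hv, Sum.elim_inr, Pi.zero_apply, sub_zero]
        linarith
  have hsep0 : ∀ z ∈ Metric.sphere (0 : ℂ) R₀, ∀ i, ρ₀ ≤ ‖z - v i‖ := by
    intro z hz i
    have hzc : ‖z‖ = R₀ := by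
      have := mem_sphere_iff_norm.mp hz; rwa [sub_zero] at this
    cases i with
    | inl j =>
        have h1 : ρ₀ ≤ d j - R₀ :=
          Finset.min'_le F₀ _ (Finset.mem_insert_of_mem
            (Finset.mem_image_of_mem _ (Finset.mem_univ j)))
        have h2 := norm_add_le ((d j : ℂ) - z) z
        rw [sub_add_cancel] at h2
        have h3 : ‖((d j : ℂ))‖ = d j := by
          rw [Complex.norm_real, Real.norm_eq_abs, abs_of_pos (hd j)]
        have h4 : ‖z - (d j : ℂ)‖ = ‖(d j : ℂ) - z‖ := norm_sub_rev _ _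
        simp only [hv, Sum.elim_inl]
        rw [h4]
        rw [h3] at h2
        linarith
    | inr j =>
        have h1 : ρ₀ ≤ R₀ := Finset.min'_le F₀ _ (Finset.mem_insert_self _ _)
        simp only [hv, Sum.elim_inr, Pi.zero_apply, sub_zero]
        linarith
  -- constants
  set C₁ : ℝ := 2 * R * (ρ⁻¹ * ρ⁻¹) with hC₁def
  set K₀ : ℝ := 2 * R₀ * ρ₀⁻¹ with hK₀def
  have hC₁ : 0 < C₁ :=
    mul_pos (mul_pos two_pos hR) (mul_pos (inv_pos.2 hρpos) (inv_pos.2 hρpos))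
  have hK₀ : 0 < K₀ := mul_pos (mul_pos two_pos hR₀) (inv_pos.2 hρ₀pos)
  refine ⟨C₁ * K₀ + C₁ * C₁ + 1, by nlinarith, min (ρ/2) (ρ₀/2),
    lt_min (by linarith) (by linarith), ?_⟩
  intro b Et Z hEtH hZpsd hZP hEb hZb hbδ
  have hb0 : 0 ≤ b := le_trans (norm_nonneg Et) hEb
  have hEρ : ‖Et‖ ≤ ρ/2 := le_trans hEb (le_trans hbδ (min_le_left _ _))
  have hEρ₀ : ‖Et‖ ≤ ρ₀/2 := le_trans hEb (le_trans hbδ (min_le_right _ _))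
  -- projection bounds
  set P : Matrix (Fin l ⊕ Fin m) (Fin l ⊕ Fin m) ℂ := fromBlocks 1 0 0 0 with hP
  have hin : ∀ i, dist ((d i : ℂ)) c < R := by
    intro i; rw [dist_eq_norm]; exact henc i
  have hout' : R < ‖c‖ := by exact hout
  have hdiffb : ‖rieszProj d c R Et - P‖ ≤ C₁ * b := by
    calc ‖rieszProj d c R Et - P‖ ≤ C₁ * ‖Et‖ :=
          riesz_diff_bound d c R ρ hR hρpos hsep1 hin hout' Et hEρ
    _ ≤ C₁ * b := mul_le_mul_of_nonneg_left hEb hC₁.le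
  have hP0b : ‖rieszProj d 0 R₀ Et‖ ≤ K₀ :=
    riesz_norm_bound d 0 R₀ ρ₀ hR₀ hρ₀pos hsep0 Et hEρ₀
  -- algebra with Z
  set D := rieszProj d c R Et - P with hD
  have hPD : rieszProj d c R Et = P + D := by rw [hD]; abel
  have hPZ : P * Z = 0 := by
    have hZH : Zᴴ = Z := hZpsd.1
    have hPH : Pᴴ = P := by
      rw [hP, Matrix.fromBlocks_conjTranspose]
      simp
    rw [← hPH, ← hZH, ← Matrix.conjTranspose_mul, hZP, Matrix.conjTranspose_zero]
  have h1 : rieszProj d c R Et * Z = D * Z := by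
    rw [hPD, add_mul, hPZ, zero_add]
  have hDZ : ‖D * Z‖ ≤ (C₁ * b) * b := by
    calc ‖D * Z‖ ≤ ‖D‖ * ‖Z‖ := norm_mul_le _ _
    _ ≤ (C₁ * b) * b := by
        apply mul_le_mul hdiffb hZb (norm_nonneg _)
        positivity
  constructor
  · rw [h1]
    calc ‖D * Z * rieszProj d 0 R₀ Et‖ ≤ ‖D * Z‖ * ‖rieszProj d 0 R₀ Et‖ := norm_mul_le _ _
    _ ≤ ((C₁ * b) * b) * K₀ := by
        apply mul_le_mul hDZ hP0b (norm_nonneg _)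
        positivity
    _ ≤ (C₁ * K₀ + C₁ * C₁ + 1) * b ^ 2 := by nlinarith
  · rw [h1, hPD, mul_add, mul_assoc D Z P, hZP, mul_zero, zero_add]
    calc ‖D * Z * D‖ ≤ ‖D * Z‖ * ‖D‖ := norm_mul_le _ _
    _ ≤ ((C₁ * b) * b) * (C₁ * b) := by
        apply mul_le_mul hDZ hdiffb (norm_nonneg _)
        positivity
    _ ≤ (C₁ * K₀ + C₁ * C₁ + 1) * b ^ 3 := by
        have hb3 : 0 ≤ b ^ 3 := by positivity
        nlinarith [mul_nonneg (mul_pos hC₁ hK₀).le hb3, hb3]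
end

section
/- Let s > 1 and define f(t) = t^s for t ≥ 0 and f(t) = 0 for t < 0; then f is C¹ on ℝ. For any positive semi-definite A = U Λ_α U*, the map E ↦ (A+E)^s (defined via f on Hermitian matrices) is Fréchet differentiable at 0 with derivative E ↦ U([f, α] ∘ (U*EU))U*, where [f,α]_{ij} = (α_i^s − α_j^s)/(α_i − α_j) for α_i ≠ α_j and s·α_i^{s−1} otherwise (interpreting 0^{s−1}·s = 0 when α_i = 0 and s > 1). -/
open Matrix
open scoped Matrix.Norms.L2Operator Matrix ComplexOrder

/-- The divided-difference matrix of `t ↦ t^s` (extended by `0` for `t < 0`) on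
`α ≥ 0`, with `s·α_i^{s−1}` interpreted as `0` when `α_i = 0` and `s > 1`. -/
noncomputable def divPowDeriv {ι : Type*} (s : ℝ) (α : ι → ℝ) : Matrix ι ι ℂ :=
  Matrix.of fun i j =>
    if α i = α j then
      (if α i = 0 then 0 else ((s * α i ^ (s - 1) : ℝ) : ℂ))
    else (((α i ^ s - α j ^ s) / (α i - α j) : ℝ) : ℂ)

namespace PowSingAux


noncomputable def f (s t : ℝ) : ℝ := if 0 ≤ t then t ^ s else 0

lemma f_eq {s : ℝ} (hs : 1 < s) (t : ℝ) : f s t = (max t 0) ^ s := by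
  unfold f
  split_ifs with h
  · rw [max_eq_left h]
  · rw [max_eq_right (le_of_not_ge h), Real.zero_rpow (by linarith)]

lemma hasDerivAt_f {s : ℝ} (hs : 1 < s) (t : ℝ) :
    HasDerivAt (f s) (s * (max t 0) ^ (s - 1)) t := by
  rcases lt_trichotomy t 0 with ht | ht | ht
  · have h0 : HasDerivAt (fun _ : ℝ => (0:ℝ)) 0 t := hasDerivAt_const _ _
    have : f s =ᶠ[nhds t] fun _ => (0:ℝ) := by
      filter_upwards [gt_mem_nhds ht] with x hx
      simp [f, not_le.2 hx]
    rw [max_eq_right ht.le, Real.zero_rpow (by linarith), mul_zero]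
    exact h0.congr_of_eventuallyEq this
  · subst ht
    rw [max_self, Real.zero_rpow (by linarith), mul_zero]
    rw [hasDerivAt_iff_isLittleO]
    simp only [f, sub_zero, le_refl, if_true, Real.zero_rpow (by linarith : s ≠ 0),
      smul_zero, sub_zero]
    have h1 : Filter.Tendsto (fun t : ℝ => |t| ^ (s - 1)) (nhds 0) (nhds 0) := by
      have : ContinuousAt (fun x : ℝ => x ^ (s - 1)) 0 :=
        Real.continuousAt_rpow_const 0 (s - 1) (Or.inr (by linarith))
      have h2 : Filter.Tendsto (fun x : ℝ => x ^ (s - 1)) (nhds 0) (nhds 0) := by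
        simpa [Real.zero_rpow (by linarith : s - 1 ≠ 0)] using this.tendsto
      exact h2.comp (by simpa using continuous_abs.tendsto (0:ℝ))
    have h2 : (fun t : ℝ => |t| ^ (s - 1)) =o[nhds 0] (fun _ => (1:ℝ)) :=
      (Asymptotics.isLittleO_one_iff ℝ).2 h1
    have h3 : (fun t : ℝ => |t| ^ (s - 1) * t) =o[nhds 0] (fun t : ℝ => 1 * t) :=
      h2.mul_isBigO (Asymptotics.isBigO_refl _ _)
    have h4 : (fun t : ℝ => if 0 ≤ t then t ^ s else 0) =O[nhds 0]
        (fun t : ℝ => |t| ^ (s - 1) * t) := by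
      apply Asymptotics.isBigO_of_le
      intro x
      rw [Real.norm_eq_abs, Real.norm_eq_abs, abs_mul, abs_of_nonneg (Real.rpow_nonneg (abs_nonneg x) _)]
      have : |x| ^ (s - 1) * |x| = |x| ^ s := by
        have := Real.rpow_add' (abs_nonneg x) (y := s - 1) (z := 1) (by intro h; linarith)
        rw [Real.rpow_one] at this
        rw [← this]; norm_num
      rw [this]
      split_ifs with h
      · rw [abs_of_nonneg (Real.rpow_nonneg h _), abs_of_nonneg h]
      · simpa using Real.rpow_nonneg (abs_nonneg x) s
    simpa using h4.trans_isLittleO h3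
  · have hd : HasDerivAt (fun x : ℝ => x ^ s) (s * t ^ (s - 1)) t :=
      Real.hasDerivAt_rpow_const (Or.inl (ne_of_gt ht))
    have : f s =ᶠ[nhds t] fun x => x ^ s := by
      filter_upwards [lt_mem_nhds ht] with x hx
      simp [f, hx.le]
    rw [max_eq_left ht.le]
    exact hd.congr_of_eventuallyEq this

lemma deriv_f {s : ℝ} (hs : 1 < s) (t : ℝ) :
    deriv (f s) t = s * (max t 0) ^ (s - 1) := (hasDerivAt_f hs t).deriv

lemma continuous_deriv_f {s : ℝ} (hs : 1 < s) : Continuous (deriv (f s)) := by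
  have : Continuous fun t : ℝ => s * (max t 0) ^ (s - 1) := by
    apply continuous_const.mul
    apply Continuous.rpow_const (continuous_id.max continuous_const)
    intro x; exact Or.inr (by linarith)
  convert this using 1
  funext t; exact deriv_f hs t

lemma contDiff_f {s : ℝ} (hs : 1 < s) : ContDiff ℝ 1 (f s) := by
  rw [contDiff_one_iff_deriv]
  exact ⟨fun t => (hasDerivAt_f hs t).differentiableAt, continuous_deriv_f hs⟩


noncomputable def g (s a b : ℝ) : ℝ :=
  if a = b then deriv (f s) a else (f s a - f s b) / (a - b)

lemma g_comm (s a b : ℝ) : g s a b = g s b a := by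
  unfold g
  rcases eq_or_ne a b with h | h
  · subst h; simp
  · rw [if_neg h, if_neg (Ne.symm h), ← neg_sub (f s b), ← neg_sub b a, neg_div_neg_eq]

lemma g_mul (s a b : ℝ) : g s a b * (a - b) = f s a - f s b := by
  unfold g
  rcases eq_or_ne a b with h | h
  · subst h; simp
  · rw [if_neg h, div_mul_cancel₀ _ (sub_ne_zero.2 h)]

lemma g_eq_integral {s : ℝ} (hs : 1 < s) (a b : ℝ) :
    g s a b = ∫ u in (0:ℝ)..1, deriv (f s) (b + u * (a - b)) := by
  rcases eq_or_ne a b with h | h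
  · subst h
    simp [g, intervalIntegral.integral_const]
  · have hint : ∀ u v : ℝ, IntervalIntegrable (deriv (f s)) MeasureTheory.volume u v :=
      fun u v => (continuous_deriv_f hs).intervalIntegrable u v
    have hftc : ∫ x in b..a, deriv (f s) x = f s a - f s b :=
      intervalIntegral.integral_deriv_eq_sub
        (fun x _ => ((contDiff_f hs).differentiable one_ne_zero).differentiableAt) (hint b a)
    have hcomp : ∫ u in (0:ℝ)..1, deriv (f s) ((a - b) * u + b)
        = (a - b)⁻¹ • ∫ x in ((a-b) * 0 + b)..((a-b) * 1 + b), deriv (f s) x :=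
      intervalIntegral.integral_comp_mul_add (deriv (f s)) (sub_ne_zero.2 h) b
    have : ∫ u in (0:ℝ)..1, deriv (f s) (b + u * (a - b))
        = ∫ u in (0:ℝ)..1, deriv (f s) ((a - b) * u + b) := by
      congr 1; funext u; ring_nf
    rw [this, hcomp]
    simp only [mul_zero, zero_add, mul_one, sub_add_cancel]
    rw [hftc, g, if_neg h, smul_eq_mul, div_eq_inv_mul]

lemma continuous_g {s : ℝ} (hs : 1 < s) : Continuous (fun p : ℝ × ℝ => g s p.1 p.2) := by
  have hc : Continuous (Function.uncurry fun (p : ℝ × ℝ) (u : ℝ) =>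
      deriv (f s) (p.2 + u * (p.1 - p.2))) := by
    apply (continuous_deriv_f hs).comp
    fun_prop
  have := intervalIntegral.continuous_parametric_intervalIntegral_of_continuous'
    (μ := MeasureTheory.volume) hc 0 1
  convert this using 1
  funext p
  exact g_eq_integral hs p.1 p.2


variable {n : Type*} [Fintype n] [DecidableEq n]

omit [DecidableEq n] in
lemma coord_le_norm (x : EuclideanSpace ℂ n) (i : n) : ‖x i‖ ≤ ‖x‖ := by
  rw [EuclideanSpace.norm_eq]
  calc ‖x i‖ = Real.sqrt (‖x i‖ ^ 2) := (Real.sqrt_sq (norm_nonneg _)).symm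
  _ ≤ _ := Real.sqrt_le_sqrt
      (Finset.single_le_sum (fun k _ => sq_nonneg ‖x k‖) (Finset.mem_univ i))

lemma entry_le_norm (M : Matrix n n ℂ) (i j : n) : ‖M i j‖ ≤ ‖M‖ := by
  have h := M.l2_opNorm_mulVec (EuclideanSpace.single j (1:ℂ))
  rw [EuclideanSpace.norm_single, norm_one, mul_one] at h
  refine le_trans ?_ ((coord_le_norm _ i).trans h)
  have : ((EuclideanSpace.equiv n ℂ).symm (M *ᵥ (EuclideanSpace.single j (1:ℂ)))) i
      = M i j := by
    show (M *ᵥ Pi.single j (1:ℂ)) i = M i j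
    rw [Matrix.mulVec_single]
    exact mul_one _
  rw [this]

lemma norm_single (i j : n) (c : ℂ) : ‖Matrix.single i j c‖ ≤ ‖c‖ := by
  rw [Matrix.l2_opNorm_def]
  apply ContinuousLinearMap.opNorm_le_bound _ (norm_nonneg c)
  intro x
  have hx : (LinearEquiv.trans Matrix.toEuclideanLin
      LinearMap.toContinuousLinearMap (Matrix.single i j c)) x
      = EuclideanSpace.single i (c * x j) := by
    apply PiLp.ext
    intro k
    show (Matrix.single i j c *ᵥ (WithLp.equiv 2 (n → ℂ)) x) k = _
    rw [Matrix.mulVec, dotProduct]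
    rw [Finset.sum_eq_single j]
    · simp [Matrix.single, EuclideanSpace.single_apply, eq_comm]
    · intro b _ hb
      simp [Matrix.single, hb.symm]
    · simp
  rw [hx, EuclideanSpace.norm_single, norm_mul]
  exact mul_le_mul_of_nonneg_left (coord_le_norm x j) (norm_nonneg c)

lemma norm_le_sum_entries (M : Matrix n n ℂ) : ‖M‖ ≤ ∑ i, ∑ j, ‖M i j‖ := by
  calc ‖M‖ = ‖∑ i, ∑ j, Matrix.single i j (M i j)‖ := by
        rw [← Matrix.matrix_eq_sum_single M]
  _ ≤ ∑ i, ∑ j, ‖Matrix.single i j (M i j)‖ :=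
        (norm_sum_le _ _).trans (Finset.sum_le_sum fun i _ => norm_sum_le _ _)
  _ ≤ ∑ i, ∑ j, ‖M i j‖ :=
        Finset.sum_le_sum fun i _ => Finset.sum_le_sum fun j _ => norm_single i j _

lemma norm_unitary [Nonempty n] (U : Matrix.unitaryGroup n ℂ) :
    ‖(U : Matrix n n ℂ)‖ = 1 := by
  have : Nontrivial (Matrix n n ℂ) := by
    refine ⟨0, 1, fun h => ?_⟩
    have := congrFun (congrFun h (Classical.arbitrary n)) (Classical.arbitrary n)
    simp [Matrix.one_apply] at this
  exact CStarRing.norm_coe_unitary U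

lemma abs_eigenvalue_le_norm (M : Matrix n n ℂ) (hM : M.IsHermitian) (i : n) :
    |hM.eigenvalues i| ≤ ‖M‖ := by
  have h := M.l2_opNorm_mulVec ((hM.eigenvectorBasis i : EuclideanSpace ℂ n))
  rw [hM.eigenvectorBasis.orthonormal.1 i, mul_one] at h
  refine le_trans (le_of_eq ?_) h
  have hv : (EuclideanSpace.equiv n ℂ).symm (M *ᵥ (hM.eigenvectorBasis i : EuclideanSpace ℂ n))
      = hM.eigenvalues i • (hM.eigenvectorBasis i : EuclideanSpace ℂ n) := by
    apply PiLp.ext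
    intro k
    have := congrFun (hM.mulVec_eigenvectorBasis i) k
    exact this
  rw [hv, norm_smul, hM.eigenvectorBasis.orthonormal.1 i, mul_one, Real.norm_eq_abs]


lemma entry_of_eq (W X : Matrix n n ℂ) (a b : n → ℂ)
    (h : W * Matrix.diagonal b = Matrix.diagonal a * W + X) (i j : n) :
    X i j = (b j - a i) * W i j := by
  have h1 := congrFun (congrFun h i) j
  rw [Matrix.mul_diagonal] at h1
  have h2 : (Matrix.diagonal a * W + X) i j = a i * W i j + X i j := by
    rw [Matrix.add_apply, Matrix.diagonal_mul]
  rw [h2] at h1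
  linear_combination -h1

lemma delta_of (W : Matrix n n ℂ) (h : star W * W = 1) (l j : n) :
    (∑ k, star (W k l) * W k j) = if l = j then (1:ℂ) else 0 := by
  have h1 := congrFun (congrFun h l) j
  rw [Matrix.mul_apply] at h1
  simp only [Matrix.star_apply] at h1
  rw [h1, Matrix.one_apply]

lemma N_entry_sum (W X D0 : Matrix n n ℂ) (fα fβ : n → ℂ) (Gβ Gα : n → n → ℂ)
    (h1 : ∀ i j, W i j * fβ j - fα i * W i j = Gβ i j * X i j)
    (h2 : ∀ i k, D0 i k = Gα i k)
    (hδ : ∀ l j, (∑ k, star (W k l) * W k j) = if l = j then (1:ℂ) else 0)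
    (i j : n) :
    (W * Matrix.diagonal fβ - Matrix.diagonal fα * W - (D0 ⊙ (X * star W)) * W) i j
      = ∑ k, ∑ l, (Gβ i l - Gα i k) * (X i l * (star (W k l) * W k j)) := by
  have expand : (W * Matrix.diagonal fβ - Matrix.diagonal fα * W
      - (D0 ⊙ (X * star W)) * W) i j
      = W i j * fβ j - fα i * W i j
        - ∑ k, (D0 i k * ∑ l, X i l * star (W k l)) * W k j := by
    simp only [Matrix.sub_apply, Matrix.mul_diagonal, Matrix.diagonal_mul]
    congr 1
  rw [expand]
  have hsplit : (∑ k, ∑ l, (Gβ i l - Gα i k) * (X i l * (star (W k l) * W k j)))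
      = (∑ k, ∑ l, Gβ i l * (X i l * (star (W k l) * W k j)))
        - (∑ k, ∑ l, Gα i k * (X i l * (star (W k l) * W k j))) := by
    rw [← Finset.sum_sub_distrib]
    refine Finset.sum_congr rfl fun k _ => ?_
    rw [← Finset.sum_sub_distrib]
    refine Finset.sum_congr rfl fun l _ => ?_
    ring
  have hS1 : (∑ k, ∑ l, Gβ i l * (X i l * (star (W k l) * W k j)))
      = Gβ i j * X i j := by
    rw [Finset.sum_comm]
    have hl : ∀ l, (∑ k, Gβ i l * (X i l * (star (W k l) * W k j)))
        = (if l = j then Gβ i l * X i l else 0) := by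
      intro l
      have hfac : (∑ k, Gβ i l * (X i l * (star (W k l) * W k j)))
          = (Gβ i l * X i l) * ∑ k, star (W k l) * W k j := by
        rw [Finset.mul_sum]
        exact Finset.sum_congr rfl fun k _ => by ring
      rw [hfac, hδ l j, mul_ite, mul_one, mul_zero]
    rw [Finset.sum_congr rfl (fun l _ => hl l),
      Finset.sum_ite_eq' Finset.univ j (fun l => Gβ i l * X i l)]
    simp
  have hS2 : (∑ k, ∑ l, Gα i k * (X i l * (star (W k l) * W k j)))
      = ∑ k, (D0 i k * ∑ l, X i l * star (W k l)) * W k j := by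
    refine Finset.sum_congr rfl fun k _ => ?_
    rw [h2 i k, Finset.mul_sum, Finset.sum_mul]
    refine Finset.sum_congr rfl fun l _ => ?_
    ring
  rw [hsplit, hS1, hS2, ← h1 i j]


end PowSingAux

open PowSingAux
set_option maxHeartbeats 2000000
/-- For `s > 1`, the function `f(t) = t^s` for `t ≥ 0`, `f(t) = 0` for `t < 0`, is `C¹`
on `ℝ`, and for PSD `A = U Λ_α U*`, `E ↦ (A+E)^s` is Fréchet differentiable at `0` with
derivative `E ↦ U([f,α] ∘ (U*EU))U*`. -/
theorem pow_differentiable_singular {n : ℕ} (s : ℝ) (hs : 1 < s)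
    (A : Matrix (Fin n) (Fin n) ℂ) (hA : A.PosSemidef) :
    ContDiff ℝ 1 (fun t : ℝ => if 0 ≤ t then t ^ s else 0) ∧
    ∀ ε > (0 : ℝ), ∃ δ > (0 : ℝ),
      ∀ E : Matrix (Fin n) (Fin n) ℂ, E.IsHermitian → ‖E‖ ≤ δ →
        ‖herFun (fun t : ℝ => if 0 ≤ t then t ^ s else 0) (A + E) -
          herFun (fun t : ℝ => if 0 ≤ t then t ^ s else 0) A -
          (hA.1.eigenvectorUnitary : Matrix (Fin n) (Fin n) ℂ) *
            (divPowDeriv s hA.1.eigenvalues ⊙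
              (star (hA.1.eigenvectorUnitary : Matrix (Fin n) (Fin n) ℂ) * E *
                (hA.1.eigenvectorUnitary : Matrix (Fin n) (Fin n) ℂ))) *
            star (hA.1.eigenvectorUnitary : Matrix (Fin n) (Fin n) ℂ)‖ ≤ ε * ‖E‖ := by
  classical
  refine ⟨contDiff_f hs, ?_⟩
  intro ε hε
  rcases Nat.eq_zero_or_pos n with hn | hn
  · refine ⟨1, one_pos, fun E hE hEn => ?_⟩
    subst hn
    have h0 : ∀ M : Matrix (Fin 0) (Fin 0) ℂ, M = 0 := fun M => by
      ext i j; exact i.elim0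
    have hnorm : ∀ M : Matrix (Fin 0) (Fin 0) ℂ, ‖M‖ = 0 := fun M => by rw [h0 M, norm_zero]
    rw [hnorm]
    exact mul_nonneg hε.le (norm_nonneg _)
  haveI : Nonempty (Fin n) := ⟨⟨0, hn⟩⟩
  -- notation
  set F : ℝ → ℝ := fun t : ℝ => if 0 ≤ t then t ^ s else 0 with hF
  have hFf : F = f s := rfl
  set U : Matrix (Fin n) (Fin n) ℂ := (hA.1.eigenvectorUnitary : Matrix (Fin n) (Fin n) ℂ)
    with hUdef
  set α : Fin n → ℝ := hA.1.eigenvalues with hαdef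
  have hα0 : ∀ i, 0 ≤ α i := fun i => hA.eigenvalues_nonneg i
  have hαK : ∀ i, |α i| ≤ ‖A‖ := fun i => abs_eigenvalue_le_norm A hA.1 i
  have hU1 : U * star U = 1 := Matrix.mem_unitaryGroup_iff.mp hA.1.eigenvectorUnitary.2
  have hU2 : star U * U = 1 := Matrix.mem_unitaryGroup_iff'.mp hA.1.eigenvectorUnitary.2
  have hUn : ‖U‖ = 1 := norm_unitary _
  -- modulus of continuity
  set R : ℝ := ‖A‖ + 1 with hR
  have hR0 : 0 < R := by positivity
  set K : Set (ℝ × ℝ) := Set.Icc (-R) R ×ˢ Set.Icc (-R) R with hK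
  have hKc : IsCompact K := (isCompact_Icc.prod isCompact_Icc)
  have hgc : Continuous (fun p : ℝ × ℝ => g s p.1 p.2) := continuous_g hs
  obtain ⟨C, hC⟩ := hKc.exists_bound_of_continuousOn hgc.continuousOn
  have hC0 : 0 ≤ C := le_trans (norm_nonneg _) (hC (0, 0) (by
    constructor <;> constructor <;> simp <;> linarith))
  set ε₁ : ℝ := ε / ((n : ℝ) ^ 4 + 1) with hε₁def
  have hε₁ : 0 < ε₁ := by positivity
  obtain ⟨θ, hθ0, hθ⟩ := (Metric.uniformContinuousOn_iff_le.mp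
    (hKc.uniformContinuousOn_of_continuous hgc.continuousOn)) ε₁ hε₁
  set δ : ℝ := min 1 (min (θ ^ 2) ((ε₁ / (2 * C + 1)) ^ 2)) with hδdef
  have hδ0 : 0 < δ := by
    apply lt_min one_pos
    apply lt_min (by positivity) (by positivity)
  refine ⟨δ, hδ0, fun E hE hEδ => ?_⟩
  set t : ℝ := ‖E‖ with htdef
  have ht0 : 0 ≤ t := norm_nonneg _
  have hAE : (A + E).IsHermitian := hA.1.add hE
  set V : Matrix (Fin n) (Fin n) ℂ := (hAE.eigenvectorUnitary : Matrix (Fin n) (Fin n) ℂ)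
    with hVdef
  set β : Fin n → ℝ := hAE.eigenvalues with hβdef
  have hV1 : V * star V = 1 := Matrix.mem_unitaryGroup_iff.mp hAE.eigenvectorUnitary.2
  have hV2 : star V * V = 1 := Matrix.mem_unitaryGroup_iff'.mp hAE.eigenvectorUnitary.2
  have hVn : ‖V‖ = 1 := norm_unitary _
  have hβK : ∀ i, |β i| ≤ ‖A‖ + t := fun i =>
    le_trans (abs_eigenvalue_le_norm (A + E) hAE i) (norm_add_le A E)
  have htδ : t ≤ δ := hEδ
  have ht1 : t ≤ 1 := le_trans htδ (min_le_left _ _)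
  have hδθ : δ ≤ θ ^ 2 := le_trans (min_le_right _ _) (min_le_left _ _)
  have hδC : δ ≤ (ε₁ / (2 * C + 1)) ^ 2 := le_trans (min_le_right _ _) (min_le_right _ _)
  -- cancellation helpers
  have cU : ∀ B : Matrix (Fin n) (Fin n) ℂ, U * (star U * B) = B := fun B => by
    rw [← Matrix.mul_assoc, hU1, Matrix.one_mul]
  have cV : ∀ B : Matrix (Fin n) (Fin n) ℂ, V * (star V * B) = B := fun B => by
    rw [← Matrix.mul_assoc, hV1, Matrix.one_mul]
  set W : Matrix (Fin n) (Fin n) ℂ := star U * V with hWdef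
  set X : Matrix (Fin n) (Fin n) ℂ := star U * E * V with hXdef
  set Dfβ : Matrix (Fin n) (Fin n) ℂ := Matrix.diagonal (fun i => (F (β i) : ℂ)) with hDfβ
  set Dfα : Matrix (Fin n) (Fin n) ℂ := Matrix.diagonal (fun i => (F (α i) : ℂ)) with hDfα
  set D0 : Matrix (Fin n) (Fin n) ℂ := divPowDeriv s α with hD0def
  -- functional calculus unfolded
  have hfAE : herFun F (A + E) = V * Dfβ * star V := by
    unfold herFun
    rw [dif_pos hAE]
  have hfA : herFun F A = U * Dfα * star U := by
    unfold herFun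
    rw [dif_pos hA.1]
  -- star of W
  have hstarW : star W = star V * U := by rw [hWdef, StarMul.star_mul, star_star]
  have hXW : X * star W = star U * E * U := by
    rw [hstarW, hXdef]
    simp only [Matrix.mul_assoc]
    rw [cV]
  -- the three cancellation identities
  have e1 : U * (W * Dfβ) * star V = V * Dfβ * star V := by
    rw [hWdef]
    simp only [Matrix.mul_assoc]
    rw [cU]
  have e2 : U * (Dfα * W) * star V = U * Dfα * star U := by
    rw [hWdef]
    simp only [Matrix.mul_assoc]
    rw [hV1, Matrix.mul_one]
  have e3 : U * ((D0 ⊙ (X * star W)) * W) * star V = U * (D0 ⊙ (star U * E * U)) * star U := by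
    rw [hXW, hWdef]
    simp only [Matrix.mul_assoc]
    rw [hV1, Matrix.mul_one]
  set N : Matrix (Fin n) (Fin n) ℂ := W * Dfβ - Dfα * W - (D0 ⊙ (X * star W)) * W with hNdef
  have key : herFun F (A + E) - herFun F A - U * (D0 ⊙ (star U * E * U)) * star U
      = U * N * star V := by
    rw [hfAE, hfA, hNdef]
    simp only [Matrix.mul_sub, Matrix.sub_mul]
    rw [e1, e2, e3]
  -- identity (1): X entries
  have hspecA : A = U * Matrix.diagonal (RCLike.ofReal ∘ α) * star U := hA.1.spectral_theorem
  have hspecAE : A + E = V * Matrix.diagonal (RCLike.ofReal ∘ β) * star V := hAE.spectral_theorem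
  have hcast : ∀ (γ : Fin n → ℝ), (RCLike.ofReal ∘ γ : Fin n → ℂ) = fun i => (γ i : ℂ) := by
    intro γ; funext i; rfl
  have hmat : W * Matrix.diagonal (fun i => (β i : ℂ))
      = Matrix.diagonal (fun i => (α i : ℂ)) * W + X := by
    have h1 : star U * (A + E) * V = W * Matrix.diagonal (fun i => (β i : ℂ)) := by
      rw [hspecAE, hcast]
      calc star U * (V * Matrix.diagonal (fun i => (β i : ℂ)) * star V) * V
          = star U * V * Matrix.diagonal (fun i => (β i : ℂ)) * (star V * V) := by
            simp only [Matrix.mul_assoc]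
        _ = W * Matrix.diagonal (fun i => (β i : ℂ)) := by
            rw [hV2, Matrix.mul_one, hWdef]
    have h2 : star U * (A + E) * V = Matrix.diagonal (fun i => (α i : ℂ)) * W + X := by
      rw [Matrix.mul_add, Matrix.add_mul]
      congr 1
      rw [hspecA, hcast]
      calc star U * (U * Matrix.diagonal (fun i => (α i : ℂ)) * star U) * V
          = (star U * U) * Matrix.diagonal (fun i => (α i : ℂ)) * (star U * V) := by
            simp only [Matrix.mul_assoc]
        _ = Matrix.diagonal (fun i => (α i : ℂ)) * W := by
            rw [hU2, Matrix.one_mul, hWdef]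
    rw [← h1, h2]
  have hXentry : ∀ i j, X i j = ((β j : ℂ) - (α i : ℂ)) * W i j := fun i j =>
    entry_of_eq W X (fun i => (α i : ℂ)) (fun i => (β i : ℂ)) hmat i j
  -- unitarity of W entrywise
  have hWW : star W * W = 1 := by
    rw [hstarW, hWdef]
    simp only [Matrix.mul_assoc]
    rw [cU, hV2]
  have hdelta : ∀ l j, (∑ k, star (W k l) * W k j) = if l = j then (1 : ℂ) else 0 :=
    fun l j => delta_of W hWW l j
  -- D0 entries
  have hD0entry : ∀ i k, D0 i k = ((g s (α i) (α k) : ℝ) : ℂ) := by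
    intro i k
    rw [hD0def]
    show (if α i = α k then (if α i = 0 then 0 else ((s * α i ^ (s - 1) : ℝ) : ℂ))
        else (((α i ^ s - α k ^ s) / (α i - α k) : ℝ) : ℂ)) = _
    unfold g
    rcases eq_or_ne (α i) (α k) with h | h
    · rw [if_pos h, if_pos h, deriv_f hs, max_eq_left (hα0 i)]
      rcases eq_or_ne (α i) 0 with h0 | h0
      · rw [if_pos h0, h0, Real.zero_rpow (by linarith : s - 1 ≠ 0)]
        norm_num
      · rw [if_neg h0]
    · rw [if_neg h, if_neg h]
      have hfi : f s (α i) = α i ^ s := if_pos (hα0 i)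
      have hfk : f s (α k) = α k ^ s := if_pos (hα0 k)
      rw [hfi, hfk]
  -- entry formula for N
  have hfirst : ∀ i j, W i j * (F (β j) : ℂ) - (F (α i) : ℂ) * W i j
      = ((g s (β j) (α i) : ℝ) : ℂ) * X i j := by
    intro i j
    have hgm := g_mul s (β j) (α i)
    rw [hXentry i j]
    have hcast2 : ((F (β j) : ℝ) : ℂ) - ((F (α i) : ℝ) : ℂ)
        = ((g s (β j) (α i) : ℝ) : ℂ) * ((β j : ℂ) - (α i : ℂ)) :=
      calc ((F (β j) : ℝ) : ℂ) - ((F (α i) : ℝ) : ℂ)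
          = ((F (β j) - F (α i) : ℝ) : ℂ) := by push_cast; ring
      _ = ((g s (β j) (α i) * (β j - α i) : ℝ) : ℂ) := by rw [hFf, ← hgm]
      _ = ((g s (β j) (α i) : ℝ) : ℂ) * ((β j : ℂ) - (α i : ℂ)) := by push_cast; ring
    linear_combination W i j * hcast2
  have hNentry : ∀ i j, N i j = ∑ k, ∑ l,
      (((g s (β l) (α i) : ℝ) : ℂ) - ((g s (α i) (α k) : ℝ) : ℂ))
        * (X i l * (star (W k l) * W k j)) := by
    intro i j
    rw [hNdef, hDfβ, hDfα]
    exact N_entry_sum W X D0 (fun i => (F (α i) : ℂ)) (fun j => (F (β j) : ℂ))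
      (fun i l => ((g s (β l) (α i) : ℝ) : ℂ)) (fun i k => ((g s (α i) (α k) : ℝ) : ℂ))
      hfirst hD0entry hdelta i j
  -- norm bounds
  have hXnorm : ‖X‖ ≤ t := by
    rw [hXdef]
    calc ‖star U * E * V‖ ≤ ‖star U * E‖ * ‖V‖ := Matrix.l2_opNorm_mul _ _
    _ ≤ ‖star U‖ * ‖E‖ * ‖V‖ :=
        mul_le_mul_of_nonneg_right (Matrix.l2_opNorm_mul _ _) (norm_nonneg _)
    _ = t := by
        rw [Matrix.star_eq_conjTranspose, Matrix.l2_opNorm_conjTranspose, hUn, hVn]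
        ring
  have hWnorm : ‖W‖ ≤ 1 := by
    rw [hWdef]
    calc ‖star U * V‖ ≤ ‖star U‖ * ‖V‖ := Matrix.l2_opNorm_mul _ _
    _ = 1 := by
        rw [Matrix.star_eq_conjTranspose, Matrix.l2_opNorm_conjTranspose, hUn, hVn, mul_one]
  have hWe : ∀ k l, ‖W k l‖ ≤ 1 := fun k l => le_trans (entry_le_norm W k l) hWnorm
  have hXe : ∀ i l, ‖X i l‖ ≤ t := fun i l => le_trans (entry_le_norm X i l) hXnorm
  have hXWe : ∀ k l, ‖X k l‖ = |β l - α k| * ‖W k l‖ := by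
    intro k l
    rw [hXentry k l, norm_mul]
    congr 1
    rw [← Complex.ofReal_sub, Complex.norm_real, Real.norm_eq_abs]
  have hαmem : ∀ i, (α i) ∈ Set.Icc (-R) R := by
    intro i
    have := hαK i
    rw [Set.mem_Icc]
    constructor <;> [linarith [abs_le.mp this |>.1]; linarith [abs_le.mp this |>.2]]
  have hβmem : ∀ i, (β i) ∈ Set.Icc (-R) R := by
    intro i
    have := hβK i
    rw [Set.mem_Icc]
    constructor
    · linarith [abs_le.mp this |>.1]
    · linarith [abs_le.mp this |>.2]
  -- key per-term bound
  have hterm : ∀ i j k l, ‖(((g s (β l) (α i) : ℝ) : ℂ) - ((g s (α i) (α k) : ℝ) : ℂ))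
      * (X i l * (star (W k l) * W k j))‖ ≤ ε₁ * t := by
    intro i j k l
    rw [norm_mul, norm_mul, norm_mul, norm_star]
    have hcoef : ‖(((g s (β l) (α i) : ℝ) : ℂ) - ((g s (α i) (α k) : ℝ) : ℂ))‖
        = |g s (α i) (β l) - g s (α i) (α k)| := by
      rw [show (((g s (β l) (α i) : ℝ) : ℂ) - ((g s (α i) (α k) : ℝ) : ℂ))
          = ((g s (β l) (α i) - g s (α i) (α k) : ℝ) : ℂ) by push_cast; ring,
        Complex.norm_real, Real.norm_eq_abs, g_comm s (β l) (α i)]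
    rw [hcoef]
    have hmemp : ((α i, β l) : ℝ × ℝ) ∈ K := ⟨hαmem i, hβmem l⟩
    have hmemq : ((α i, α k) : ℝ × ℝ) ∈ K := ⟨hαmem i, hαmem k⟩
    have hdistpq : dist ((α i, β l) : ℝ × ℝ) ((α i, α k) : ℝ × ℝ) = |β l - α k| := by
      rw [Prod.dist_eq, Real.dist_eq, Real.dist_eq, sub_self, abs_zero]
      exact max_eq_right (abs_nonneg _)
    have hcoef2C : |g s (α i) (β l) - g s (α i) (α k)| ≤ 2 * C + 1 := by
      have h1 := hC (α i, β l) hmemp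
      have h2 := hC (α i, α k) hmemq
      rw [Real.norm_eq_abs] at h1 h2
      calc |g s (α i) (β l) - g s (α i) (α k)|
          ≤ |g s (α i) (β l)| + |g s (α i) (α k)| := abs_sub _ _
      _ ≤ 2 * C + 1 := by linarith
    rcases eq_or_lt_of_le ht0 with ht | ht
    · have hX0 : ‖X i l‖ = 0 :=
        le_antisymm (ht ▸ hXe i l) (norm_nonneg _)
      rw [hX0]
      simp [← ht]
    rcases le_or_gt |β l - α k| (Real.sqrt t) with hcase | hcase
    · have hdist : dist ((α i, β l) : ℝ × ℝ) ((α i, α k) : ℝ × ℝ) ≤ θ := by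
        rw [hdistpq]
        refine le_trans hcase ?_
        calc Real.sqrt t ≤ Real.sqrt δ := Real.sqrt_le_sqrt htδ
        _ ≤ Real.sqrt (θ ^ 2) := Real.sqrt_le_sqrt hδθ
        _ = θ := by rw [Real.sqrt_sq hθ0.le]
      have hg := hθ _ hmemp _ hmemq hdist
      rw [Real.dist_eq] at hg
      have inner1 : ‖W k l‖ * ‖W k j‖ ≤ 1 * 1 :=
        mul_le_mul (hWe k l) (hWe k j) (norm_nonneg _) zero_le_one
      have inner2 : ‖X i l‖ * (‖W k l‖ * ‖W k j‖) ≤ t * (1 * 1) :=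
        mul_le_mul (hXe i l) inner1 (by positivity) ht0
      calc |g s (α i) (β l) - g s (α i) (α k)| * (‖X i l‖ * (‖W k l‖ * ‖W k j‖))
          ≤ ε₁ * (t * (1 * 1)) := mul_le_mul hg inner2 (by positivity) hε₁.le
      _ = ε₁ * t := by ring
    · have hWsmall : ‖W k l‖ ≤ ε₁ / (2 * C + 1) := by
        have h1 : ‖W k l‖ * |β l - α k| ≤ t := by
          rw [mul_comm, ← hXWe k l]; exact hXe k l
        have h2 : ‖W k l‖ ≤ t / |β l - α k| := by
          rw [le_div_iff₀ (lt_trans (Real.sqrt_pos.mpr ht) hcase)]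
          exact h1
        have h3 : t / |β l - α k| ≤ t / Real.sqrt t :=
          div_le_div_of_nonneg_left ht0 (Real.sqrt_pos.mpr ht) hcase.le
        have h4 : t / Real.sqrt t = Real.sqrt t := Real.div_sqrt
        have h5 : Real.sqrt t ≤ ε₁ / (2 * C + 1) := by
          calc Real.sqrt t ≤ Real.sqrt δ := Real.sqrt_le_sqrt htδ
          _ ≤ Real.sqrt ((ε₁ / (2 * C + 1)) ^ 2) := Real.sqrt_le_sqrt hδC
          _ = ε₁ / (2 * C + 1) := Real.sqrt_sq (by positivity)
        linarith
      have inner1 : ‖W k l‖ * ‖W k j‖ ≤ (ε₁ / (2 * C + 1)) * 1 :=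
        mul_le_mul hWsmall (hWe k j) (norm_nonneg _) (by positivity)
      have inner2 : ‖X i l‖ * (‖W k l‖ * ‖W k j‖) ≤ t * ((ε₁ / (2 * C + 1)) * 1) :=
        mul_le_mul (hXe i l) inner1 (by positivity) ht0
      calc |g s (α i) (β l) - g s (α i) (α k)| * (‖X i l‖ * (‖W k l‖ * ‖W k j‖))
          ≤ (2 * C + 1) * (t * ((ε₁ / (2 * C + 1)) * 1)) :=
            mul_le_mul hcoef2C inner2 (by positivity) (by positivity)
      _ = ε₁ * t := by
            field_simp
  -- entry bound for N
  have hNe : ∀ i j, ‖N i j‖ ≤ (n : ℝ) ^ 2 * (ε₁ * t) := by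
    intro i j
    rw [hNentry i j]
    calc ‖∑ k, ∑ l, (((g s (β l) (α i) : ℝ) : ℂ) - ((g s (α i) (α k) : ℝ) : ℂ))
        * (X i l * (star (W k l) * W k j))‖
        ≤ ∑ k, ∑ l, ‖(((g s (β l) (α i) : ℝ) : ℂ) - ((g s (α i) (α k) : ℝ) : ℂ))
            * (X i l * (star (W k l) * W k j))‖ :=
          (norm_sum_le _ _).trans (Finset.sum_le_sum fun k _ => norm_sum_le _ _)
    _ ≤ ∑ (_ : Fin n), ∑ (_ : Fin n), ε₁ * t :=
          Finset.sum_le_sum fun k _ => Finset.sum_le_sum fun l _ => hterm i j k l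
    _ = (n : ℝ) ^ 2 * (ε₁ * t) := by
          simp [Finset.sum_const, Finset.card_univ]
          ring
  -- assemble
  rw [key]
  calc ‖U * N * star V‖ ≤ ‖U * N‖ * ‖star V‖ := Matrix.l2_opNorm_mul _ _
  _ ≤ ‖U‖ * ‖N‖ * ‖star V‖ :=
      mul_le_mul_of_nonneg_right (Matrix.l2_opNorm_mul _ _) (norm_nonneg _)
  _ = ‖N‖ := by
      rw [Matrix.star_eq_conjTranspose, Matrix.l2_opNorm_conjTranspose, hUn, hVn]
      ring
  _ ≤ ∑ i, ∑ j, ‖N i j‖ := norm_le_sum_entries N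
  _ ≤ ∑ (_ : Fin n), ∑ (_ : Fin n), (n : ℝ) ^ 2 * (ε₁ * t) :=
      Finset.sum_le_sum fun i _ => Finset.sum_le_sum fun j _ => hNe i j
  _ = (n : ℝ) ^ 4 * ε₁ * t := by
      simp [Finset.sum_const, Finset.card_univ]
      ring
  _ ≤ ε * t := by
      apply mul_le_mul_of_nonneg_right _ ht0
      rw [hε₁def]
      rw [mul_div_assoc']
      rw [div_le_iff₀ (by positivity)]
      nlinarith [pow_nonneg (Nat.cast_nonneg n : (0:ℝ) ≤ n) 4]
end

section
/- Let Λ⁺ be an l×l positive definite diagonal matrix and C₁ an l×m matrix. Define V_ap = [[I_l, −(Λ⁺)^{-1}C₁],[C₁*(Λ⁺)^{-1}, I_m]]. Then the columns of the first block column of V_ap have pairwise inner products of size O(‖C₁‖²) off the diagonal and norms 1 + O(‖C₁‖²), and there exists a matrix W with orthonormal columns (W*W = I) such that the first block column of V_ap equals the corresponding columns of W up to O(‖C₁‖²), and similarly for the second block column. Consequently V_ap = W + O(‖C₁‖²) for some unitary W. -/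
open Matrix
open scoped Matrix.Norms.L2Operator Matrix ComplexOrder

/-- The approximate eigenvector matrix `V_ap = [[I, −(Λ⁺)⁻¹C₁],[C₁*(Λ⁺)⁻¹, I]]`. -/
noncomputable def Vap {l m : ℕ} (d : Fin l → ℝ) (C₁ : Matrix (Fin l) (Fin m) ℂ) :
    Matrix (Fin l ⊕ Fin m) (Fin l ⊕ Fin m) ℂ :=
  Matrix.fromBlocks 1 (-((Matrix.diagonal fun i => ((d i)⁻¹ : ℂ)) * C₁))
    (C₁ᴴ * Matrix.diagonal fun i => ((d i)⁻¹ : ℂ)) 1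

section Aux

lemma l2_opNorm_le_of_forall {m n : Type*} [Fintype m] [Fintype n] [DecidableEq n]
    (A : Matrix m n ℂ) {c : ℝ} (hc : 0 ≤ c)
    (h : ∀ x : EuclideanSpace ℂ n,
      ‖(WithLp.equiv 2 (m → ℂ)).symm (A *ᵥ (WithLp.equiv 2 (n → ℂ)) x)‖ ≤ c * ‖x‖) :
    ‖A‖ ≤ c := by
  rw [Matrix.l2_opNorm_def]
  exact ContinuousLinearMap.opNorm_le_bound _ hc fun x => h x

lemma euclid_norm_eq {n : Type*} [Fintype n] (w : n → ℂ) :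
    ‖(WithLp.equiv 2 (n → ℂ)).symm w‖ = Real.sqrt (∑ i, ‖w i‖ ^ 2) := by
  rw [EuclideanSpace.norm_eq]
  rfl

lemma l2_opNorm_one_le {n : Type*} [Fintype n] [DecidableEq n] :
    ‖(1 : Matrix n n ℂ)‖ ≤ 1 := by
  apply l2_opNorm_le_of_forall _ zero_le_one
  intro x
  simp [Matrix.one_mulVec]

lemma l2_opNorm_diagonal_le {n : Type*} [Fintype n] [DecidableEq n]
    (v : n → ℂ) {c : ℝ} (hc : 0 ≤ c) (h : ∀ i, ‖v i‖ ≤ c) :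
    ‖Matrix.diagonal v‖ ≤ c := by
  apply l2_opNorm_le_of_forall _ hc
  intro x
  rw [euclid_norm_eq]
  rw [show ‖x‖ = Real.sqrt (∑ i, ‖x i‖ ^ 2) from EuclideanSpace.norm_eq x]
  have : ∀ i, ‖(Matrix.diagonal v *ᵥ (WithLp.equiv 2 (n → ℂ)) x) i‖ ^ 2
      ≤ c ^ 2 * ‖x i‖ ^ 2 := by
    intro i
    rw [Matrix.mulVec_diagonal]
    rw [norm_mul, mul_pow]
    have h0 : (0:ℝ) ≤ ‖x i‖ ^ 2 := by positivity
    exact mul_le_mul_of_nonneg_right (pow_le_pow_left₀ (norm_nonneg _) (h i) 2) h0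
  calc Real.sqrt (∑ i, ‖(Matrix.diagonal v *ᵥ (WithLp.equiv 2 (n → ℂ)) x) i‖ ^ 2)
      ≤ Real.sqrt (∑ i, c ^ 2 * ‖x i‖ ^ 2) :=
        Real.sqrt_le_sqrt (Finset.sum_le_sum fun i _ => this i)
    _ = c * Real.sqrt (∑ i, ‖x i‖ ^ 2) := by
        rw [← Finset.mul_sum, Real.sqrt_mul (by positivity), Real.sqrt_sq hc]

lemma l2_opNorm_unitary_le {n : Type*} [Fintype n] [DecidableEq n]
    {U : Matrix n n ℂ} (hU : U ∈ Matrix.unitaryGroup n ℂ) : ‖U‖ ≤ 1 := by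
  have h1 : ‖U‖ * ‖U‖ = ‖(1 : Matrix n n ℂ)‖ := by
    rw [← Matrix.l2_opNorm_conjTranspose_mul_self U, ← Matrix.star_eq_conjTranspose,
      (Matrix.mem_unitaryGroup_iff').mp hU]
  nlinarith [l2_opNorm_one_le (n := n), norm_nonneg U]

end Aux

section Blocks

lemma sqrt_add_le' (a b : ℝ) (ha : 0 ≤ a) (hb : 0 ≤ b) :
    Real.sqrt (a + b) ≤ Real.sqrt a + Real.sqrt b := by
  rw [show Real.sqrt a + Real.sqrt b
      = Real.sqrt ((Real.sqrt a + Real.sqrt b) ^ 2) from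
    (Real.sqrt_sq (by positivity)).symm]
  apply Real.sqrt_le_sqrt
  nlinarith [Real.sq_sqrt ha, Real.sq_sqrt hb, Real.sqrt_nonneg a, Real.sqrt_nonneg b]

lemma l2_opNorm_fromBlocks_le {n₁ n₂ m₁ m₂ : Type*}
    [Fintype n₁] [Fintype n₂] [Fintype m₁] [Fintype m₂]
    [DecidableEq n₁] [DecidableEq n₂]
    (A : Matrix m₁ n₁ ℂ) (B : Matrix m₁ n₂ ℂ) (C : Matrix m₂ n₁ ℂ) (D : Matrix m₂ n₂ ℂ) :
    ‖Matrix.fromBlocks A B C D‖ ≤ ‖A‖ + ‖B‖ + ‖C‖ + ‖D‖ := by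
  have hnn : (0:ℝ) ≤ ‖A‖ + ‖B‖ + ‖C‖ + ‖D‖ := by positivity
  apply l2_opNorm_le_of_forall _ hnn
  intro x
  set x₁ : EuclideanSpace ℂ n₁ := (WithLp.equiv 2 (n₁ → ℂ)).symm
    (fun i => (WithLp.equiv 2 ((n₁ ⊕ n₂) → ℂ)) x (Sum.inl i)) with hx₁
  set x₂ : EuclideanSpace ℂ n₂ := (WithLp.equiv 2 (n₂ → ℂ)).symm
    (fun i => (WithLp.equiv 2 ((n₁ ⊕ n₂) → ℂ)) x (Sum.inr i)) with hx₂
  have hx1 : ‖x₁‖ ≤ ‖x‖ := by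
    rw [euclid_norm_eq]
    rw [show ‖x‖ = Real.sqrt (∑ i, ‖x i‖ ^ 2) from EuclideanSpace.norm_eq x]
    apply Real.sqrt_le_sqrt
    rw [Fintype.sum_sum_type]
    exact le_add_of_nonneg_right (by positivity)
  have hx2 : ‖x₂‖ ≤ ‖x‖ := by
    rw [euclid_norm_eq]
    rw [show ‖x‖ = Real.sqrt (∑ i, ‖x i‖ ^ 2) from EuclideanSpace.norm_eq x]
    apply Real.sqrt_le_sqrt
    rw [Fintype.sum_sum_type]
    exact le_add_of_nonneg_left (by positivity)
  rw [Matrix.fromBlocks_mulVec]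
  set u : m₁ → ℂ := A *ᵥ ((WithLp.equiv 2 ((n₁ ⊕ n₂) → ℂ)) x ∘ Sum.inl)
    + B *ᵥ ((WithLp.equiv 2 ((n₁ ⊕ n₂) → ℂ)) x ∘ Sum.inr) with hu
  set v : m₂ → ℂ := C *ᵥ ((WithLp.equiv 2 ((n₁ ⊕ n₂) → ℂ)) x ∘ Sum.inl)
    + D *ᵥ ((WithLp.equiv 2 ((n₁ ⊕ n₂) → ℂ)) x ∘ Sum.inr) with hv
  have hsplit : ‖(WithLp.equiv 2 ((m₁ ⊕ m₂) → ℂ)).symm (Sum.elim u v)‖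
      ≤ ‖(WithLp.equiv 2 (m₁ → ℂ)).symm u‖ + ‖(WithLp.equiv 2 (m₂ → ℂ)).symm v‖ := by
    rw [euclid_norm_eq, euclid_norm_eq, euclid_norm_eq, Fintype.sum_sum_type]
    simp only [Sum.elim_inl, Sum.elim_inr]
    exact sqrt_add_le' _ _ (by positivity) (by positivity)
  have hA' : ‖(WithLp.equiv 2 (m₁ → ℂ)).symm (A *ᵥ ((WithLp.equiv 2 ((n₁ ⊕ n₂) → ℂ)) x ∘ Sum.inl))‖
      ≤ ‖A‖ * ‖x₁‖ := Matrix.l2_opNorm_mulVec A x₁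
  have hB' : ‖(WithLp.equiv 2 (m₁ → ℂ)).symm (B *ᵥ ((WithLp.equiv 2 ((n₁ ⊕ n₂) → ℂ)) x ∘ Sum.inr))‖
      ≤ ‖B‖ * ‖x₂‖ := Matrix.l2_opNorm_mulVec B x₂
  have hC' : ‖(WithLp.equiv 2 (m₂ → ℂ)).symm (C *ᵥ ((WithLp.equiv 2 ((n₁ ⊕ n₂) → ℂ)) x ∘ Sum.inl))‖
      ≤ ‖C‖ * ‖x₁‖ := Matrix.l2_opNorm_mulVec C x₁
  have hD' : ‖(WithLp.equiv 2 (m₂ → ℂ)).symm (D *ᵥ ((WithLp.equiv 2 ((n₁ ⊕ n₂) → ℂ)) x ∘ Sum.inr))‖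
      ≤ ‖D‖ * ‖x₂‖ := Matrix.l2_opNorm_mulVec D x₂
  have hu' : ‖(WithLp.equiv 2 (m₁ → ℂ)).symm u‖
      ≤ ‖A‖ * ‖x₁‖ + ‖B‖ * ‖x₂‖ := by
    calc ‖(WithLp.equiv 2 (m₁ → ℂ)).symm u‖
        ≤ ‖(WithLp.equiv 2 (m₁ → ℂ)).symm (A *ᵥ ((WithLp.equiv 2 ((n₁ ⊕ n₂) → ℂ)) x ∘ Sum.inl))‖
          + ‖(WithLp.equiv 2 (m₁ → ℂ)).symm (B *ᵥ ((WithLp.equiv 2 ((n₁ ⊕ n₂) → ℂ)) x ∘ Sum.inr))‖ :=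
          norm_add_le ((WithLp.equiv 2 (m₁ → ℂ)).symm (A *ᵥ _)) ((WithLp.equiv 2 (m₁ → ℂ)).symm (B *ᵥ _))
      _ ≤ ‖A‖ * ‖x₁‖ + ‖B‖ * ‖x₂‖ := add_le_add hA' hB'
  have hv' : ‖(WithLp.equiv 2 (m₂ → ℂ)).symm v‖
      ≤ ‖C‖ * ‖x₁‖ + ‖D‖ * ‖x₂‖ := by
    calc ‖(WithLp.equiv 2 (m₂ → ℂ)).symm v‖
        ≤ ‖(WithLp.equiv 2 (m₂ → ℂ)).symm (C *ᵥ ((WithLp.equiv 2 ((n₁ ⊕ n₂) → ℂ)) x ∘ Sum.inl))‖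
          + ‖(WithLp.equiv 2 (m₂ → ℂ)).symm (D *ᵥ ((WithLp.equiv 2 ((n₁ ⊕ n₂) → ℂ)) x ∘ Sum.inr))‖ :=
          norm_add_le ((WithLp.equiv 2 (m₂ → ℂ)).symm (C *ᵥ _)) ((WithLp.equiv 2 (m₂ → ℂ)).symm (D *ᵥ _))
      _ ≤ ‖C‖ * ‖x₁‖ + ‖D‖ * ‖x₂‖ := add_le_add hC' hD'
  have := hsplit.trans (add_le_add hu' hv')
  refine this.trans ?_
  have h1 : ‖A‖ * ‖x₁‖ ≤ ‖A‖ * ‖x‖ := mul_le_mul_of_nonneg_left hx1 (norm_nonneg _)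
  have h2 : ‖B‖ * ‖x₂‖ ≤ ‖B‖ * ‖x‖ := mul_le_mul_of_nonneg_left hx2 (norm_nonneg _)
  have h3 : ‖C‖ * ‖x₁‖ ≤ ‖C‖ * ‖x‖ := mul_le_mul_of_nonneg_left hx1 (norm_nonneg _)
  have h4 : ‖D‖ * ‖x₂‖ ≤ ‖D‖ * ‖x‖ := mul_le_mul_of_nonneg_left hx2 (norm_nonneg _)
  nlinarith [h1, h2, h3, h4]

end Blocks

section Eig

lemma eigenvalue_abs_le {n : Type*} [Fintype n] [DecidableEq n]
    {E : Matrix n n ℂ} (hE : E.IsHermitian) (i : n) :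
    |hE.eigenvalues i| ≤ ‖E‖ := by
  have hb : ‖(hE.eigenvectorBasis i : EuclideanSpace ℂ n)‖ = 1 :=
    hE.eigenvectorBasis.orthonormal.1 i
  calc |hE.eigenvalues i|
      = ‖hE.eigenvalues i • (hE.eigenvectorBasis i : EuclideanSpace ℂ n)‖ := by
        rw [norm_smul, hb, mul_one, Real.norm_eq_abs]
    _ ≤ ‖E‖ := by
        have h := Matrix.l2_opNorm_mulVec E (hE.eigenvectorBasis i)
        rw [hb, mul_one] at h
        refine le_trans (le_of_eq ?_) h
        exact congrArg (fun w => ‖(EuclideanSpace.equiv n ℂ).symm w‖)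
          (hE.mulVec_eigenvectorBasis i).symm

lemma one_sub_invSqrt_le {μ : ℝ} (h0 : 0 ≤ μ) (h1 : μ ≤ 1) :
    |1 - (Real.sqrt (1 + μ))⁻¹| ≤ μ := by
  have hs1 : 1 ≤ Real.sqrt (1 + μ) := by
    nlinarith [Real.sq_sqrt (show (0:ℝ) ≤ 1 + μ by linarith), Real.sqrt_nonneg (1 + μ)]
  set s := Real.sqrt (1 + μ) with hs
  have hs0 : 0 < s := by linarith
  have hsq : s ^ 2 = 1 + μ := Real.sq_sqrt (by linarith)
  have hss : s⁻¹ * s = 1 := inv_mul_cancel₀ (ne_of_gt hs0)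
  have hsle : s ≤ 1 + μ := by nlinarith
  have hinv : s⁻¹ ≤ 1 := by nlinarith
  rw [abs_of_nonneg (by linarith)]
  nlinarith [mul_le_mul_of_nonneg_left hs1 h0]

lemma conj_diag_mul {n : Type*} [Fintype n] [DecidableEq n] {U : Matrix n n ℂ}
    (hU2 : star U * U = 1) (f g : n → ℂ) :
    (U * Matrix.diagonal f * star U) * (U * Matrix.diagonal g * star U)
      = U * Matrix.diagonal (fun i => f i * g i) * star U := by
  have h : (U * Matrix.diagonal f * star U) * (U * Matrix.diagonal g * star U)
      = U * (Matrix.diagonal f * ((star U * U) * (Matrix.diagonal g * star U))) := by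
    simp only [Matrix.mul_assoc]
  rw [h, hU2, one_mul, ← Matrix.mul_assoc (Matrix.diagonal f) (Matrix.diagonal g) (star U),
    Matrix.diagonal_mul_diagonal, ← Matrix.mul_assoc]

end Eig

/-- **Gram–Schmidt stability.** The columns of `V_ap` are orthonormal up to `O(‖C₁‖²)`
(`V_ap* V_ap = I + O(‖C₁‖²)`), and there is a unitary `W` (orthonormal columns,
`W*W = I`) with `V_ap = W + O(‖C₁‖²)`. -/
theorem vap_approx_unitary {l m : ℕ} (d : Fin l → ℝ) (hd : ∀ i, 0 < d i) :
    ∃ K > (0 : ℝ), ∃ δ > (0 : ℝ),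
      ∀ C₁ : Matrix (Fin l) (Fin m) ℂ, ‖C₁‖ ≤ δ →
        ‖star (Vap d C₁) * Vap d C₁ - 1‖ ≤ K * ‖C₁‖ ^ 2 ∧
        ∃ W ∈ Matrix.unitaryGroup (Fin l ⊕ Fin m) ℂ,
          ‖Vap d C₁ - W‖ ≤ K * ‖C₁‖ ^ 2 := by
  
  classical
  set Dinv : Matrix (Fin l) (Fin l) ℂ := Matrix.diagonal fun i => ((d i)⁻¹ : ℂ) with hDinvdef
  set b : ℝ := 1 + ∑ i, (d i)⁻¹ with hbdef
  have hsum : (0:ℝ) ≤ ∑ i, (d i)⁻¹ :=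
    Finset.sum_nonneg fun i _ => inv_nonneg.mpr (hd i).le
  have hb1 : 1 ≤ b := by rw [hbdef]; linarith
  have hDinvle : ‖Dinv‖ ≤ b := by
    apply l2_opNorm_diagonal_le _ (by linarith)
    intro i
    have h1 : ‖((d i)⁻¹ : ℂ)‖ = (d i)⁻¹ := by
      rw [norm_inv, Complex.norm_real, Real.norm_eq_abs, abs_of_nonneg (hd i).le]
    have h2 : (d i)⁻¹ ≤ ∑ j, (d j)⁻¹ :=
      Finset.single_le_sum (f := fun j => (d j)⁻¹)
        (fun j _ => inv_nonneg.mpr (hd j).le) (Finset.mem_univ i)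
    rw [h1, hbdef]; linarith
  set c : ℝ := 2 * b with hcdef
  have hc0 : 0 < c := by rw [hcdef]; linarith
  refine ⟨2 * c ^ 2, by positivity, c⁻¹, by positivity, ?_⟩
  intro C₁ hC₁
  set V := Vap d C₁ with hV
  set F : Matrix (Fin l ⊕ Fin m) (Fin l ⊕ Fin m) ℂ :=
    Matrix.fromBlocks 0 (-(Dinv * C₁)) (C₁ᴴ * Dinv) 0 with hFdef
  have hVF : V = 1 + F := by
    rw [hV, Vap, hFdef, ← hDinvdef, ← Matrix.fromBlocks_one, Matrix.fromBlocks_add]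
    simp
  have hcC : c * ‖C₁‖ ≤ 1 := by
    calc c * ‖C₁‖ ≤ c * c⁻¹ := mul_le_mul_of_nonneg_left hC₁ hc0.le
      _ = 1 := mul_inv_cancel₀ (ne_of_gt hc0)
  have hFnorm : ‖F‖ ≤ c * ‖C₁‖ := by
    rw [hFdef]
    refine (l2_opNorm_fromBlocks_le _ _ _ _).trans ?_
    have e2 : ‖Dinv * C₁‖ ≤ b * ‖C₁‖ :=
      (Matrix.l2_opNorm_mul _ _).trans
        (mul_le_mul_of_nonneg_right hDinvle (norm_nonneg _))
    have e3 : ‖C₁ᴴ * Dinv‖ ≤ ‖C₁‖ * b := by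
      refine (Matrix.l2_opNorm_mul _ _).trans ?_
      rw [Matrix.l2_opNorm_conjTranspose]
      exact mul_le_mul_of_nonneg_left hDinvle (norm_nonneg _)
    simp only [norm_zero, norm_neg]
    rw [hcdef]
    linarith
  have hstarfun : (star fun i => (((d i) : ℂ))⁻¹) = fun i => (((d i) : ℂ))⁻¹ := by
    funext i
    simp [Pi.star_apply, Complex.star_def, map_inv₀, Complex.conj_ofReal]
  have hDinvH : Dinvᴴ = Dinv := by
    rw [hDinvdef, Matrix.diagonal_conjTranspose, hstarfun]
  have hVH : Vᴴ = Matrix.fromBlocks 1 (Dinv * C₁) (-(C₁ᴴ * Dinv)) 1 := by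
    rw [hV, Vap, ← hDinvdef, Matrix.fromBlocks_conjTranspose]
    simp [Matrix.conjTranspose_mul, hDinvH]
  have h2 : Vᴴ + V = 2 := by
    have htwo : (2 : Matrix (Fin l ⊕ Fin m) (Fin l ⊕ Fin m) ℂ)
        = Matrix.fromBlocks 2 0 0 2 := by
      have hadd := Matrix.fromBlocks_add (1 : Matrix (Fin l) (Fin l) ℂ) 0 0
        (1 : Matrix (Fin m) (Fin m) ℂ) 1 0 0 1
      rw [Matrix.fromBlocks_one] at hadd
      rw [show (2 : Matrix (Fin l ⊕ Fin m) (Fin l ⊕ Fin m) ℂ) = 1 + 1 from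
        one_add_one_eq_two.symm, hadd]
      simp only [add_zero, one_add_one_eq_two]
    rw [hVH, hV, Vap, ← hDinvdef, Matrix.fromBlocks_add, htwo]
    simp only [add_neg_cancel, neg_add_cancel, one_add_one_eq_two]
  set E := star V * V - 1 with hEdef
  have hE : E = Fᴴ * F := by
    have hF2 : F = V - 1 := by rw [hVF]; abel
    rw [hEdef, hF2, Matrix.conjTranspose_sub, Matrix.conjTranspose_one,
      Matrix.star_eq_conjTranspose]
    have hexp : (Vᴴ - 1) * (V - 1) = Vᴴ * V - (Vᴴ + V) + 1 := by noncomm_ring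
    rw [hexp, h2, show (2 : Matrix (Fin l ⊕ Fin m) (Fin l ⊕ Fin m) ℂ) = 1 + 1 from
      one_add_one_eq_two.symm]
    abel
  have hEpsd : E.PosSemidef := by
    rw [hE]; exact Matrix.posSemidef_conjTranspose_mul_self F
  have hEH : E.IsHermitian := hEpsd.1
  have hEnorm : ‖E‖ ≤ c ^ 2 * ‖C₁‖ ^ 2 := by
    rw [hE, Matrix.l2_opNorm_conjTranspose_mul_self]
    calc ‖F‖ * ‖F‖ ≤ (c * ‖C₁‖) * (c * ‖C₁‖) :=
          mul_le_mul hFnorm hFnorm (norm_nonneg _) (by positivity)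
      _ = c ^ 2 * ‖C₁‖ ^ 2 := by ring
  have hE1 : ‖E‖ ≤ 1 := by
    refine hEnorm.trans ?_
    nlinarith [hcC, mul_nonneg hc0.le (norm_nonneg C₁)]
  have hCnn : (0:ℝ) ≤ c ^ 2 * ‖C₁‖ ^ 2 := by positivity
  refine ⟨hEnorm.trans (by linarith), ?_⟩
  -- construct the unitary W
  set μ := hEH.eigenvalues with hμdef
  have hμ0 : ∀ i, 0 ≤ μ i := fun i => hEpsd.eigenvalues_nonneg i
  have hμE : ∀ i, μ i ≤ ‖E‖ := fun i => (le_abs_self _).trans (eigenvalue_abs_le hEH i)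
  have hμ1 : ∀ i, μ i ≤ 1 := fun i => (hμE i).trans hE1
  set U : Matrix (Fin l ⊕ Fin m) (Fin l ⊕ Fin m) ℂ :=
    (hEH.eigenvectorUnitary : Matrix (Fin l ⊕ Fin m) (Fin l ⊕ Fin m) ℂ) with hUdef
  have hU : U ∈ Matrix.unitaryGroup (Fin l ⊕ Fin m) ℂ := hEH.eigenvectorUnitary.2
  have hU1 : U * star U = 1 := Matrix.mem_unitaryGroup_iff.mp hU
  have hU2 : star U * U = 1 := Matrix.mem_unitaryGroup_iff'.mp hU
  set g : Fin l ⊕ Fin m → ℂ := fun i => ((Real.sqrt (1 + μ i))⁻¹ : ℂ) with hgdef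
  set Q := U * Matrix.diagonal g * star U with hQdef
  have hspec : E = U * Matrix.diagonal (fun i => (μ i : ℂ)) * star U :=
    hEH.spectral_theorem
  have hSVV : star V * V
      = U * Matrix.diagonal (fun i => (1 : ℂ) + (μ i : ℂ)) * star U := by
    calc star V * V = 1 + E := by rw [hEdef]; noncomm_ring
      _ = U * Matrix.diagonal (fun _ => (1:ℂ)) * star U
          + U * Matrix.diagonal (fun i => (μ i : ℂ)) * star U := by
          rw [Matrix.diagonal_one, mul_one, hU1, ← hspec]
      _ = U * (Matrix.diagonal (fun _ => (1:ℂ))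
          + Matrix.diagonal (fun i => (μ i : ℂ))) * star U := by
          rw [Matrix.mul_add, Matrix.add_mul]
      _ = U * Matrix.diagonal (fun i => (1 : ℂ) + (μ i : ℂ)) * star U := by
          rw [Matrix.diagonal_add]
  set W := V * Q with hWdef
  have hQstar : star Q = Q := by
    rw [hQdef, Matrix.star_mul, Matrix.star_mul, star_star]
    have hdg : star (Matrix.diagonal g) = Matrix.diagonal g := by
      rw [Matrix.star_eq_conjTranspose, Matrix.diagonal_conjTranspose]
      have : (star g) = g := by
        funext i
        simp [hgdef, Pi.star_apply, Complex.star_def, map_inv₀, Complex.conj_ofReal]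
      rw [this]
    rw [hdg, Matrix.mul_assoc]
  have hscal : ∀ i, g i * ((1 : ℂ) + (μ i : ℂ)) * g i = 1 := by
    intro i
    have h0i : (0:ℝ) ≤ 1 + μ i := by linarith [hμ0 i]
    have hs : Real.sqrt (1 + μ i) ^ 2 = 1 + μ i := Real.sq_sqrt h0i
    have hs0 : 0 < Real.sqrt (1 + μ i) := Real.sqrt_pos.mpr (by linarith [hμ0 i])
    have hreal : (Real.sqrt (1 + μ i))⁻¹ * (1 + μ i) * (Real.sqrt (1 + μ i))⁻¹ = 1 := by
      rw [← hs]
      field_simp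
      rw [Real.sqrt_sq hs0.le]
    calc g i * ((1 : ℂ) + (μ i : ℂ)) * g i
        = (((Real.sqrt (1 + μ i))⁻¹ * (1 + μ i) * (Real.sqrt (1 + μ i))⁻¹ : ℝ) : ℂ) := by
          rw [hgdef]; push_cast; ring
      _ = 1 := by rw [hreal]; norm_num
  have hWmem : W ∈ Matrix.unitaryGroup (Fin l ⊕ Fin m) ℂ := by
    rw [Matrix.mem_unitaryGroup_iff']
    calc star W * W = star Q * (star V * V) * Q := by
          rw [hWdef, Matrix.star_mul]
          simp only [Matrix.mul_assoc]
      _ = (U * Matrix.diagonal g * star U)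
          * (U * Matrix.diagonal (fun i => (1 : ℂ) + (μ i : ℂ)) * star U)
          * (U * Matrix.diagonal g * star U) := by rw [hQstar, hSVV, hQdef]
      _ = U * Matrix.diagonal (fun i => g i * ((1 : ℂ) + (μ i : ℂ)) * g i) * star U := by
          rw [conj_diag_mul hU2, conj_diag_mul hU2]
      _ = U * Matrix.diagonal (fun _ => (1:ℂ)) * star U := by
          rw [show (fun i => g i * ((1 : ℂ) + (μ i : ℂ)) * g i) = fun _ => (1:ℂ) from
            funext hscal]
      _ = 1 := by rw [Matrix.diagonal_one, mul_one, hU1]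
  have hVW : V - W = V * (1 - Q) := by rw [hWdef, Matrix.mul_sub, Matrix.mul_one]
  have h1Q : 1 - Q = U * Matrix.diagonal (fun i => 1 - g i) * star U := by
    have hone : (1 : Matrix (Fin l ⊕ Fin m) (Fin l ⊕ Fin m) ℂ)
        = U * Matrix.diagonal (fun _ => (1:ℂ)) * star U := by
      rw [Matrix.diagonal_one, mul_one, hU1]
    calc (1 : Matrix (Fin l ⊕ Fin m) (Fin l ⊕ Fin m) ℂ) - Q
        = U * Matrix.diagonal (fun _ => (1:ℂ)) * star U
          - U * Matrix.diagonal g * star U := by rw [← hone, hQdef]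
      _ = U * (Matrix.diagonal (fun _ => (1:ℂ)) - Matrix.diagonal g) * star U := by
          noncomm_ring
      _ = U * Matrix.diagonal (fun i => 1 - g i) * star U := by
          rw [Matrix.diagonal_sub]
  have hdiagnorm : ‖Matrix.diagonal (fun i => 1 - g i)‖ ≤ ‖E‖ := by
    apply l2_opNorm_diagonal_le _ (norm_nonneg E)
    intro i
    have hi : (1 : ℂ) - g i = ((1 - (Real.sqrt (1 + μ i))⁻¹ : ℝ) : ℂ) := by
      rw [hgdef]; push_cast; ring
    rw [hi, Complex.norm_real, Real.norm_eq_abs]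
    exact (one_sub_invSqrt_le (hμ0 i) (hμ1 i)).trans (hμE i)
  have hQnorm : ‖(1 : Matrix (Fin l ⊕ Fin m) (Fin l ⊕ Fin m) ℂ) - Q‖ ≤ ‖E‖ := by
    rw [h1Q]
    have hUn : ‖U‖ ≤ 1 := l2_opNorm_unitary_le hU
    have hUsn : ‖star U‖ ≤ 1 := l2_opNorm_unitary_le (Unitary.star_mem hU)
    calc ‖U * Matrix.diagonal (fun i => 1 - g i) * star U‖
        ≤ ‖U * Matrix.diagonal (fun i => 1 - g i)‖ * ‖star U‖ := Matrix.l2_opNorm_mul _ _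
      _ ≤ ‖U‖ * ‖Matrix.diagonal (fun i => 1 - g i)‖ * ‖star U‖ :=
          mul_le_mul_of_nonneg_right (Matrix.l2_opNorm_mul _ _) (norm_nonneg _)
      _ ≤ 1 * ‖E‖ * 1 := by
          refine mul_le_mul (mul_le_mul hUn hdiagnorm (norm_nonneg _) zero_le_one)
            hUsn (norm_nonneg _) (by positivity)
      _ = ‖E‖ := by ring
  have hVnorm : ‖V‖ ≤ 2 := by
    rw [hVF]
    calc ‖(1 : Matrix (Fin l ⊕ Fin m) (Fin l ⊕ Fin m) ℂ) + F‖
        ≤ ‖(1 : Matrix (Fin l ⊕ Fin m) (Fin l ⊕ Fin m) ℂ)‖ + ‖F‖ := norm_add_le _ _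
      _ ≤ 1 + 1 := add_le_add l2_opNorm_one_le (hFnorm.trans hcC)
      _ = 2 := by norm_num
  refine ⟨W, hWmem, ?_⟩
  calc ‖V - W‖ = ‖V * (1 - Q)‖ := by rw [hVW]
    _ ≤ ‖V‖ * ‖(1 : Matrix (Fin l ⊕ Fin m) (Fin l ⊕ Fin m) ℂ) - Q‖ := Matrix.l2_opNorm_mul _ _
    _ ≤ 2 * (c ^ 2 * ‖C₁‖ ^ 2) :=
        mul_le_mul hVnorm (hQnorm.trans hEnorm) (norm_nonneg _) (by norm_num)
    _ = 2 * c ^ 2 * ‖C₁‖ ^ 2 := by ring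
end
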